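/- arXiv:2508.08377 — 5 statements merged into one kernel-verified Lean document; each statement's English description precedes it below -/
import Mathlib

section
/- Let p be a prime with p > d, q = p^n, and ℓ ∈ P_d. For every ζ ∈ W_ℓ, any two solutions (t₁,…,t_d) ∈ F_q^d of the system Σ_i t_i^j = ζ_j (1 ≤ j ≤ d) are permutations of each other, so π_ζ(f) := ∏_{i=1}^d f(γ(t_i)) is well defined for f : Γ → ℂ; moreover Σ_{ζ∈W_ℓ} |π_ζ(f)|² = (|W_ℓ|/q!) · Σ_ℓ(x), where x = (x_t)_{t∈F_q} with x_t = |f(γ(t))|². -/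
open Finset Polynomial
/-- The standard additive character `e(y) = exp(2πi Tr(y)/p)` on a finite field of
characteristic `p`, where `Tr` is the field trace to `ZMod p`. -/
noncomputable def charE (p : ℕ) {F : Type} [Field F] [Fintype F] [Algebra (ZMod p) F]
    (y : F) : ℂ :=
  Complex.exp (2 * Real.pi * Complex.I * ((Algebra.trace (ZMod p) F y).val : ℂ) / (p : ℂ))

/-- The moment curve `γ(ξ) = (ξ, ξ², …, ξ^d)`. -/
def mom (d : ℕ) {F : Type} [Monoid F] (ξ : F) : Fin d → F := fun i => ξ ^ ((i : ℕ) + 1)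

/-- The extension operator `(fσ)^∨(x) = q⁻¹ ∑_ξ f(ξ) e(x·γ(ξ))`. -/
noncomputable def extOp (p d : ℕ) {F : Type} [Field F] [Fintype F] [Algebra (ZMod p) F]
    (f : F → ℂ) (x : Fin d → F) : ℂ :=
  (Fintype.card F : ℂ)⁻¹ * ∑ ξ : F, f ξ * charE p (∑ i, x i * mom d ξ i)

/-- `‖(fσ)^∨‖_{L^{2d}(F_q^d, dx)}`. -/
noncomputable def extNorm (p d : ℕ) {F : Type} [Field F] [Fintype F] [Algebra (ZMod p) F]
    (f : F → ℂ) : ℝ :=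
  (∑ x : Fin d → F, ‖extOp p d f x‖ ^ (2 * d)) ^ ((1 : ℝ) / (2 * d))

/-- `‖f‖_{L²(Γ, dσ)}`. -/
noncomputable def l2Norm {F : Type} [Fintype F] (f : F → ℂ) : ℝ :=
  Real.sqrt ((Fintype.card F : ℝ)⁻¹ * ∑ ξ : F, ‖f ξ‖ ^ 2)

/-- The set of partitions of `d`, written as decreasing `d`-tuples. -/
def Pd (d : ℕ) : Finset (Fin d → Fin (d + 1)) :=
  univ.filter fun ℓ =>
    (∀ i j : Fin d, i ≤ j → (ℓ j : ℕ) ≤ (ℓ i : ℕ)) ∧ (∑ i, (ℓ i : ℕ)) = d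

/-- `ℓ! = ℓ₁!·…·ℓ_d!`. -/
def lfact {d : ℕ} (ℓ : Fin d → Fin (d + 1)) : ℕ := ∏ i, Nat.factorial (ℓ i)

/-- `binom(d,ℓ) = d!/ℓ!`. -/
def dchoose (d : ℕ) (ℓ : Fin d → Fin (d + 1)) : ℕ := Nat.factorial d / lfact ℓ

/-- `b_j(ℓ) = #{i : ℓ_i = j}`. -/
def bj {d : ℕ} (ℓ : Fin d → Fin (d + 1)) (j : ℕ) : ℕ :=
  (univ.filter fun i => (ℓ i : ℕ) = j).card

/-- `b_0(ℓ) = #{i : ℓ_i = 0} + (q - d)`. -/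
def b0 (q : ℕ) {d : ℕ} (ℓ : Fin d → Fin (d + 1)) : ℕ := bj ℓ 0 + (q - d)

/-- `binom(q, b(ℓ)) = q!/(b_0(ℓ)!·b_1(ℓ)!·…·b_d(ℓ)!)`. -/
def qmultinom (q d : ℕ) (ℓ : Fin d → Fin (d + 1)) : ℕ :=
  Nat.factorial q / ((b0 q ℓ).factorial * ∏ j ∈ Finset.Icc 1 d, (bj ℓ j).factorial)

/-- The conjectured optimal constant raised to the power `2d`:
`A = q^{-d} ∑_{ℓ∈P_d} binom(d,ℓ)² binom(q,b(ℓ))`. -/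
noncomputable def Aconst (q d : ℕ) : ℝ :=
  ((q : ℝ) ^ d)⁻¹ * ∑ ℓ ∈ Pd d, ((dchoose d ℓ : ℝ) ^ 2 * (qmultinom q d ℓ : ℝ))

/-- The elementary symmetric functions `e_k` obtained from the power sums
`ζ₁, …, ζ_d` via Newton's identities. -/
noncomputable def newtonE {F : Type} [Field F] {d : ℕ} (ζ : Fin d → F) : ℕ → F
  | 0 => 1
  | k + 1 =>
      (((k + 1 : ℕ) : F))⁻¹ *
        ∑ i ∈ Finset.range (k + 1),
          (-1 : F) ^ i * newtonE ζ (k - i) * (if h : i < d then ζ ⟨i, h⟩ else 0)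

/-- The polynomial `P_ζ(X) = X^d − s₁X^{d−1} + … + (−1)^d s_d` whose elementary symmetric
coefficients are obtained from the power sums `ζ` via Newton's identities. -/
noncomputable def Pzeta {F : Type} [Field F] {d : ℕ} (ζ : Fin d → F) : Polynomial F :=
  ∑ k ∈ Finset.range (d + 1), Polynomial.C ((-1 : F) ^ k * newtonE ζ k) * Polynomial.X ^ (d - k)

/-- `W_ℓ`: the set of `ζ` such that `P_ζ` splits completely over `F` with root
multiplicities given by the nonzero parts of `ℓ`. -/
def Wset (F : Type) [Field F] {d : ℕ} (ℓ : Fin d → Fin (d + 1)) : Set (Fin d → F) :=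
  {ζ | ∃ r : Fin d → F,
    (∀ i j : Fin d, (ℓ i : ℕ) ≠ 0 → (ℓ j : ℕ) ≠ 0 → i ≠ j → r i ≠ r j) ∧
    Pzeta ζ = ∏ i : Fin d, (Polynomial.X - Polynomial.C (r i)) ^ (ℓ i : ℕ)}

/-- `W_ℓ` as a finite set. -/
noncomputable def Wfin {F : Type} [Field F] [Fintype F] {d : ℕ}
    (ℓ : Fin d → Fin (d + 1)) : Finset (Fin d → F) :=
  (Set.toFinite (Wset F ℓ)).toFinset

/-- The symmetric sum `Σ_ℓ(x) = ∑_{τ} x_{τ(1)}^{ℓ₁} ⋯ x_{τ(d)}^{ℓ_d}`, the sum running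
over all bijections `τ : {1,…,q} → F_q` (a sum of `q!` terms). -/
noncomputable def symSumF {F : Type} [Fintype F] [DecidableEq F] {d : ℕ}
    (ℓ : Fin d → Fin (d + 1)) (x : F → ℝ) : ℝ :=
  ∑ τ : Fin (Fintype.card F) ≃ F, ∏ i : Fin d,
    if h : (i : ℕ) < Fintype.card F then x (τ ⟨(i : ℕ), h⟩) ^ (ℓ i : ℕ) else 0

/-- The symmetric sum `Σ_ℓ(x) = ∑_{τ∈S_q} x_{τ(1)}^{ℓ₁} ⋯ x_{τ(d)}^{ℓ_d}` in `q` variables. -/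
noncomputable def symSum (d q : ℕ) (ℓ : Fin d → Fin (d + 1)) (x : Fin q → ℝ) : ℝ :=
  ∑ τ : Equiv.Perm (Fin q), ∏ i : Fin d,
    if h : (i : ℕ) < q then x (τ ⟨(i : ℕ), h⟩) ^ (ℓ i : ℕ) else 0

/-- Dominance order on partitions. -/
def domLE {d : ℕ} (ℓ ℓ' : Fin d → Fin (d + 1)) : Prop :=
  ∀ k : Fin d, (∑ i ∈ univ.filter (· ≤ k), (ℓ i : ℕ)) ≤ ∑ i ∈ univ.filter (· ≤ k), (ℓ' i : ℕ)

/-- `ρ(ℓ)`: the number of nonzero parts of `ℓ`. -/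
def rho {d : ℕ} (ℓ : Fin d → Fin (d + 1)) : ℕ := (univ.filter fun i => (ℓ i : ℕ) ≠ 0).card

/-- The partition `(1,1,…,1)`. -/
def onesPart (d : ℕ) : Fin d → Fin (d + 1) := fun _ => 1

/-- The partition `(2,1,…,1,0)`. -/
def part21 (d : ℕ) : Fin d → Fin (d + 1) := fun i =>
  if (i : ℕ) = 0 then 2 else if (i : ℕ) = d - 1 then 0 else 1

/-- The partition `(2,2,1,…,1,0,0)`. -/
def part221 (d : ℕ) : Fin d → Fin (d + 1) := fun i =>
  if (i : ℕ) ≤ 1 then 2 else if d - 2 ≤ (i : ℕ) then 0 else 1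

/-- The partition `(d,0,…,0)`. -/
def topPart (d : ℕ) : Fin d → Fin (d + 1) := fun i =>
  if (i : ℕ) = 0 then Fin.last d else 0

/-- `A` written in terms of `|W_ℓ|`. -/
noncomputable def AconstW (F : Type) [Field F] [Fintype F] (d : ℕ) : ℝ :=
  ((Fintype.card F : ℝ) ^ d)⁻¹ *
    ∑ ℓ ∈ Pd d, (dchoose d ℓ : ℝ) ^ 2 * ((Wfin (F := F) ℓ).card : ℝ)

/-- `ω_ℓ = (A − binom(d,ℓ))·binom(d,ℓ)·|W_ℓ|`. -/
noncomputable def omegaW (F : Type) [Field F] [Fintype F] {d : ℕ}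
    (ℓ : Fin d → Fin (d + 1)) : ℝ :=
  (AconstW F d - (dchoose d ℓ : ℝ)) * (dchoose d ℓ : ℝ) * ((Wfin (F := F) ℓ).card : ℝ)

section MultisetAux

variable {α β : Type*} {d : ℕ}

lemma mmap (g : α → β) (k : Fin d → ℕ) (r : Fin d → α) :
    (∑ i, k i • ({r i} : Multiset α)).map g = ∑ i, k i • ({g (r i)} : Multiset β) := by
  rw [show Multiset.map g = ⇑(Multiset.mapAddMonoidHom g) from rfl, map_sum]
  simp [Multiset.map_nsmul]

lemma mprod {M : Type*} [CommMonoid M] (k : Fin d → ℕ) (r : Fin d → M) :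
    (∑ i, k i • ({r i} : Multiset M)).prod = ∏ i, r i ^ k i := by
  rw [Multiset.prod_sum]
  simp [Multiset.nsmul_singleton]

lemma mcard (k : Fin d → ℕ) (r : Fin d → α) :
    Multiset.card (∑ i, k i • ({r i} : Multiset α)) = ∑ i, k i := by
  classical
  induction (Finset.univ : Finset (Fin d)) using Finset.induction_on with
  | empty => simp
  | insert _ _ hb ih => simp [Finset.sum_insert hb, ih]

lemma univ_val_eq_ofFn (t : Fin d → α) :
    Multiset.map t Finset.univ.val = ((List.ofFn t : List α) : Multiset α) := by
  simp [Fin.univ_def, List.ofFn_eq_map]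

lemma exists_rep (m : Multiset α) (hm : Multiset.card m = d) :
    ∃ t : Fin d → α, Multiset.map t Finset.univ.val = m := by
  have hl : m.toList.length = d := by rw [Multiset.length_toList, hm]
  refine ⟨fun i => m.toList.get (Fin.cast hl.symm i), ?_⟩
  rw [univ_val_eq_ofFn]
  have h2 := congrArg (fun l : List α => (l : Multiset α))
    ((List.ofFn_congr hl _).symm.trans (List.ofFn_get m.toList))
  exact h2.trans (Multiset.coe_toList m)

lemma perm_of_multiset_eq [Fintype α] [DecidableEq α] {t s : Fin d → α}
    (h : Multiset.map s Finset.univ.val = Multiset.map t Finset.univ.val) :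
    ∃ π : Equiv.Perm (Fin d), ∀ i, s i = t (π i) := by
  letI : LinearOrder α := LinearOrder.lift' (Fintype.equivFin α) (Equiv.injective _)
  have hperm : List.ofFn (s ∘ Tuple.sort s) = List.ofFn (t ∘ Tuple.sort t) := by
    apply List.Perm.eq_of_sortedLE (List.sortedLE_ofFn_iff.2 (Tuple.monotone_sort s))
      (List.sortedLE_ofFn_iff.2 (Tuple.monotone_sort t))
    have p1 : (List.ofFn (s ∘ Tuple.sort s)).Perm (List.ofFn s) :=
      Equiv.Perm.ofFn_comp_perm _ s
    have p2 : (List.ofFn s).Perm (List.ofFn t) := by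
      rw [← Multiset.coe_eq_coe, ← univ_val_eq_ofFn, ← univ_val_eq_ofFn]; exact h
    exact (p1.trans p2).trans (Equiv.Perm.ofFn_comp_perm _ t).symm
  have heq : s ∘ Tuple.sort s = t ∘ Tuple.sort t := List.ofFn_injective hperm
  refine ⟨(Tuple.sort s).symm.trans (Tuple.sort t), fun i => ?_⟩
  have := congrFun heq ((Tuple.sort s).symm i)
  simpa using this

lemma extend_perm {γ : Type*} [Fintype α] [DecidableEq α] [DecidableEq γ]
    (S : Finset γ) (u v : γ → α) (hu : Set.InjOn u S) (hv : Set.InjOn v S) :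
    ∃ σ : Equiv.Perm α, ∀ i ∈ S, σ (u i) = v i := by
  classical
  induction S using Finset.induction_on with
  | empty => exact ⟨1, by simp⟩
  | @insert b S hb ih =>
    obtain ⟨σ, hσ⟩ := ih (hu.mono (by simp [Finset.coe_insert, Set.subset_insert]))
      (hv.mono (by simp [Finset.coe_insert, Set.subset_insert]))
    refine ⟨σ.trans (Equiv.swap (σ (u b)) (v b)), fun i hi => ?_⟩
    rcases Finset.mem_insert.1 hi with rfl | hi'
    · simp
    · have hib : i ≠ b := fun h => hb (h ▸ hi')
      have h1 : σ (u i) ≠ σ (u b) := fun h => hib (hu (by simp [hi']) (by simp) (σ.injective h))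
      have h2 : σ (u i) = v i := hσ i hi'
      have h3 : v i ≠ v b := fun h => hib (hv (by simp [hi']) (by simp) h)
      simp only [Equiv.trans_apply]
      rw [h2] at h1 ⊢
      exact Equiv.swap_apply_of_ne_of_ne h1 h3

noncomputable def pows {F : Type} [Field F] (d : ℕ) (m : Multiset F) : Fin d → F :=
  fun j => (m.map fun a => a ^ ((j : ℕ) + 1)).sum

variable {F : Type} [Field F] {d : ℕ}

lemma pows_tuple (t : Fin d → F) (j : Fin d) :
    pows d (Multiset.map t Finset.univ.val) j = ∑ i, t i ^ ((j : ℕ) + 1) := by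
  rw [pows, Multiset.map_map]
  rfl

lemma newton_field (m : Multiset F) (hm : Multiset.card m = d) (k : ℕ) :
    (k : F) * m.esymm k = (-1) ^ (k + 1) *
      ∑ a ∈ (Finset.HasAntidiagonal.antidiagonal k).filter (fun a : ℕ × ℕ => a.1 < k),
        (-1 : F) ^ a.1 * m.esymm a.1 * (m.map (· ^ a.2)).sum := by
  obtain ⟨t, ht⟩ := exists_rep m hm
  have hE : ∀ j, (MvPolynomial.aeval t) (MvPolynomial.esymm (Fin d) F j) = m.esymm j := by
    intro j; rw [MvPolynomial.aeval_esymm_eq_multiset_esymm, ht]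
  have hP : ∀ j, (MvPolynomial.aeval t) (MvPolynomial.psum (Fin d) F j)
      = (m.map (· ^ j)).sum := by
    intro j
    rw [MvPolynomial.psum, map_sum, ← ht, Multiset.map_map]
    simp only [map_pow, MvPolynomial.aeval_X]
    rfl
  have := congrArg (MvPolynomial.aeval t) (MvPolynomial.mul_esymm_eq_sum (Fin d) F k)
  simpa only [map_mul, map_sum, map_pow, map_neg, map_one, map_natCast, hE, hP] using this

lemma newtonE_eq (hchar : ∀ k : ℕ, 0 < k → k ≤ d → (k : F) ≠ 0)
    (m : Multiset F) (hm : Multiset.card m = d) :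
    ∀ k, k ≤ d → newtonE (pows d m) k = m.esymm k := by
  intro k
  induction k using Nat.strong_induction_on with
  | _ k ih =>
    match k with
    | 0 =>
      intro _
      simp only [newtonE]
      rw [Multiset.esymm, Multiset.powersetCard_zero_left]
      simp
    | Nat.succ k' =>
      intro hk
      have hne : ((k' + 1 : ℕ) : F) ≠ 0 := hchar _ (Nat.succ_pos _) hk
      -- rewrite the filtered antidiagonal sum as a range sum
      have hre : ∑ a ∈ (Finset.HasAntidiagonal.antidiagonal (k' + 1)).filter (fun a : ℕ × ℕ => a.1 < k' + 1),
            ((-1 : F) ^ a.1 * m.esymm a.1 * (m.map (· ^ a.2)).sum)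
          = ∑ i ∈ Finset.range (k' + 1),
            (-1 : F) ^ (k' - i) * m.esymm (k' - i) * (m.map (· ^ (i + 1))).sum := by
        apply Finset.sum_nbij' (i := fun a : ℕ × ℕ => k' - a.1)
          (j := fun u : ℕ => (k' - u, u + 1))
        · intro a ha
          simp only [Finset.mem_filter, Finset.HasAntidiagonal.mem_antidiagonal] at ha
          simp only [Finset.mem_range]; omega
        · intro u hu
          simp only [Finset.mem_range] at hu
          simp only [Finset.mem_filter, Finset.HasAntidiagonal.mem_antidiagonal]; omega
        · intro a ha
          simp only [Finset.mem_filter, Finset.HasAntidiagonal.mem_antidiagonal] at ha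
          have h1 : k' - (k' - a.1) = a.1 := by omega
          have h2 : k' - a.1 + 1 = a.2 := by omega
          simp [h1, h2]
        · intro u hu
          simp only [Finset.mem_range] at hu
          simp only []; omega
        · intro a ha
          simp only [Finset.mem_filter, Finset.HasAntidiagonal.mem_antidiagonal] at ha
          have h1 : k' - (k' - a.1) = a.1 := by omega
          have h2 : k' - a.1 + 1 = a.2 := by omega
          rw [h1, h2]
      have hnewton := newton_field m hm (k' + 1)
      rw [hre] at hnewton
      -- simplify signs
      have hsign : ∀ i ∈ Finset.range (k' + 1),
          ((-1 : F)) ^ (k' + 1 + 1) * ((-1 : F) ^ (k' - i) * m.esymm (k' - i)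
            * (m.map (· ^ (i + 1))).sum)
          = (-1 : F) ^ i * m.esymm (k' - i) * (m.map (· ^ (i + 1))).sum := by
        intro i hi
        have hi' : i ≤ k' := by simpa [Nat.lt_succ_iff] using hi
        have hpow : ((-1 : F)) ^ (k' + 1 + 1) * (-1 : F) ^ (k' - i) = (-1 : F) ^ i := by
          rw [← pow_add]
          rcases Nat.even_or_odd i with he | ho
          · rw [he.neg_one_pow]
            refine Even.neg_one_pow ?_
            rw [Nat.even_iff] at he ⊢; omega
          · rw [ho.neg_one_pow]
            refine Odd.neg_one_pow ?_
            rw [Nat.odd_iff] at ho ⊢; omega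
        calc ((-1 : F)) ^ (k' + 1 + 1) * ((-1 : F) ^ (k' - i) * m.esymm (k' - i)
              * (m.map (· ^ (i + 1))).sum)
            = (((-1 : F)) ^ (k' + 1 + 1) * (-1 : F) ^ (k' - i)) * m.esymm (k' - i)
              * (m.map (· ^ (i + 1))).sum := by ring
          _ = (-1 : F) ^ i * m.esymm (k' - i) * (m.map (· ^ (i + 1))).sum := by rw [hpow]
      rw [Finset.mul_sum, Finset.sum_congr rfl hsign] at hnewton
      -- unfold newtonE
      rw [newtonE]
      have hterm : ∀ i ∈ Finset.range (k' + 1),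
          (-1 : F) ^ i * newtonE (pows d m) (k' - i)
            * (if h : i < d then pows d m ⟨i, h⟩ else 0)
          = (-1 : F) ^ i * m.esymm (k' - i) * (m.map (· ^ (i + 1))).sum := by
        intro i hi
        have hi' : i ≤ k' := by simpa [Nat.lt_succ_iff] using hi
        have hid : i < d := by omega
        rw [dif_pos hid, ih (k' - i) (by omega) (by omega)]
        rfl
      rw [Finset.sum_congr rfl hterm, ← hnewton,
        inv_mul_cancel_left₀ (by exact_mod_cast hne)]

lemma pzeta_eq (hchar : ∀ k : ℕ, 0 < k → k ≤ d → (k : F) ≠ 0)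
    (m : Multiset F) (hm : Multiset.card m = d) :
    Pzeta (pows d m) = (m.map fun r => X - C r).prod := by
  rw [Multiset.prod_X_sub_X_eq_sum_esymm, hm, Pzeta]
  apply Finset.sum_congr rfl
  intro k hk
  rw [newtonE_eq hchar m hm k (Nat.lt_succ_iff.1 (Finset.mem_range.1 hk))]
  rw [map_mul, map_pow, map_neg, map_one]
  ring

lemma roots_pows (hchar : ∀ k : ℕ, 0 < k → k ≤ d → (k : F) ≠ 0)
    (m : Multiset F) (hm : Multiset.card m = d) :
    (Pzeta (pows d m)).roots = m := by
  rw [pzeta_eq hchar m hm, Polynomial.roots_multiset_prod_X_sub_C]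



theorem symmetric_sum_over_Wset
    {p n d : ℕ} (hp : p.Prime) (hpd : d < p)
    {F : Type} [Field F] [Fintype F] [DecidableEq F]
    (hcard : Fintype.card F = p ^ n)
    (ℓ : Fin d → Fin (d + 1)) (hℓ : ℓ ∈ Pd d) :
    (∀ ζ ∈ Wset F ℓ, ∀ t s : Fin d → F,
      (∀ j : Fin d, ∑ i, t i ^ ((j : ℕ) + 1) = ζ j) →
      (∀ j : Fin d, ∑ i, s i ^ ((j : ℕ) + 1) = ζ j) →
      ∃ π : Equiv.Perm (Fin d), ∀ i, s i = t (π i)) ∧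
    (∀ f : F → ℂ, ∀ T : (Fin d → F) → (Fin d → F),
      (∀ ζ ∈ Wfin (F := F) ℓ, ∀ j : Fin d, ∑ i, T ζ i ^ ((j : ℕ) + 1) = ζ j) →
      ∑ ζ ∈ Wfin (F := F) ℓ, ‖∏ i, f (T ζ i)‖ ^ 2 =
        ((Wfin (F := F) ℓ).card : ℝ) / (Nat.factorial (Fintype.card F) : ℝ) *
          symSumF ℓ fun t => ‖f t‖ ^ 2) := by

  classical
  have hq2 : 1 < Fintype.card F := Fintype.one_lt_card
  have hn : n ≠ 0 := by
    rintro rfl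
    rw [hcard] at hq2
    simp at hq2
  have hdq : d < Fintype.card F := by
    rw [hcard]
    exact lt_of_lt_of_le hpd (Nat.le_self_pow hn p)
  haveI : CharP F (ringChar F) := ringChar.charP F
  have hrc : ringChar F = p := by
    have hprime : (ringChar F).Prime := CharP.char_is_prime F (ringChar F)
    obtain ⟨n', -, hc'⟩ := FiniteField.card F (ringChar F)
    have hdvd : ringChar F ∣ p ^ n := by
      rw [← hcard, hc']
      exact dvd_pow_self _ n'.pos.ne'
    exact (Nat.prime_dvd_prime_iff_eq hprime hp).1 (hprime.dvd_of_dvd_pow hdvd)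
  haveI hchp : CharP F p := hrc ▸ ringChar.charP F
  have hchar : ∀ k : ℕ, 0 < k → k ≤ d → (k : F) ≠ 0 := by
    intro k hk1 hk2 h0
    have hdvd := (CharP.cast_eq_zero_iff F p k).1 h0
    have := Nat.le_of_dvd hk1 hdvd
    omega
  have hWmem : ∀ ζ : Fin d → F, ζ ∈ Wfin (F := F) ℓ ↔ ζ ∈ Wset F ℓ :=
    fun ζ => Set.Finite.mem_toFinset _
  have hsumℓ : ∑ i, (ℓ i : ℕ) = d := by
    have h := hℓ
    simp only [Pd, Finset.mem_filter] at h
    exact h.2.2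
  have hWroots : ∀ (ζ : Fin d → F) (r : Fin d → F),
      (Pzeta ζ = ∏ i, (X - C (r i)) ^ (ℓ i : ℕ)) →
      (Pzeta ζ).roots = ∑ i, (ℓ i : ℕ) • ({r i} : Multiset F) := by
    intro ζ r hP
    rw [hP, ← mprod (fun i => (ℓ i : ℕ)) (fun i => X - C (r i)),
      ← mmap (fun a => X - C a) (fun i => (ℓ i : ℕ)) r]
    exact Polynomial.roots_multiset_prod_X_sub_C _
  have htuple : ∀ (ζ : Fin d → F) (t : Fin d → F),
      (∀ j : Fin d, ∑ i, t i ^ ((j : ℕ) + 1) = ζ j) →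
      Multiset.map t Finset.univ.val = (Pzeta ζ).roots := by
    intro ζ t ht
    have hc : Multiset.card (Multiset.map t Finset.univ.val) = d := by simp
    have hpows : pows d (Multiset.map t Finset.univ.val) = ζ := by
      funext j
      rw [pows_tuple]
      exact ht j
    rw [← hpows, roots_pows hchar _ hc]
  constructor
  · intro ζ hζ t s ht hs
    exact perm_of_multiset_eq ((htuple ζ s hs).trans (htuple ζ t ht).symm)
  · intro f T hT
    set x : F → ℝ := fun a => ‖f a‖ ^ 2 with hx
    have hembd : ∀ i : Fin d, (i : ℕ) < Fintype.card F := fun i => lt_trans i.2 hdq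
    set ms : (Fin (Fintype.card F) ≃ F) → Multiset F :=
      fun τ => ∑ i, (ℓ i : ℕ) • ({τ ⟨(i : ℕ), hembd i⟩} : Multiset F) with hms
    set Ψ : (Fin (Fintype.card F) ≃ F) → (Fin d → F) := fun τ => pows d (ms τ) with hΨ
    have hmscard : ∀ τ, Multiset.card (ms τ) = d := by
      intro τ
      simp only [hms]
      rw [mcard]
      exact hsumℓ
    have hroots : ∀ τ, (Pzeta (Ψ τ)).roots = ms τ := fun τ => roots_pows hchar _ (hmscard τ)
    have hmem : ∀ τ, Ψ τ ∈ Wfin (F := F) ℓ := by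
      intro τ
      rw [hWmem]
      refine ⟨fun i => τ ⟨(i : ℕ), hembd i⟩, ?_, ?_⟩
      · intro i j _ _ hij hEq
        apply hij
        have h1 := τ.injective hEq
        exact Fin.ext (by simpa [Fin.mk.injEq] using h1)
      · rw [pzeta_eq hchar _ (hmscard τ)]
        simp only [hms]
        rw [mmap, mprod]
    have hfibroots : ∀ (ζ : Fin d → F) τ, Ψ τ = ζ → ms τ = (Pzeta ζ).roots := by
      intro ζ τ h
      rw [← h, hroots]
    set Wf := Wfin (F := F) ℓ with hWf
    set fib : (Fin d → F) → Finset (Fin (Fintype.card F) ≃ F) :=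
      fun ζ => Finset.univ.filter (fun τ => Ψ τ = ζ) with hfib
    have hTpows : ∀ ζ ∈ Wf, pows d (Multiset.map (T ζ) Finset.univ.val) = ζ := by
      intro ζ hζ
      funext j
      rw [pows_tuple]
      exact hT ζ hζ j
    have hstep : ∀ ζ₁ ∈ Wf, ∀ ζ₂ ∈ Wf, (fib ζ₁).card ≤ (fib ζ₂).card := by
      intro ζ₁ h₁ ζ₂ h₂
      obtain ⟨r₁, hr₁, hP₁⟩ := (hWmem ζ₁).1 h₁
      obtain ⟨r₂, hr₂, hP₂⟩ := (hWmem ζ₂).1 h₂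
      set S : Finset (Fin d) := Finset.univ.filter (fun i => (ℓ i : ℕ) ≠ 0) with hS
      have hinj : ∀ (r : Fin d → F),
          (∀ i j, (ℓ i : ℕ) ≠ 0 → (ℓ j : ℕ) ≠ 0 → i ≠ j → r i ≠ r j) → Set.InjOn r S := by
        intro r hr i hi j hj hEq
        by_contra hne
        simp only [hS, Finset.coe_filter, Set.mem_setOf_eq] at hi hj
        exact hr i j hi.2 hj.2 hne hEq
      obtain ⟨σ, hσ⟩ := extend_perm S r₁ r₂ (hinj r₁ hr₁) (hinj r₂ hr₂)
      apply Finset.card_le_card_of_injOn (fun τ => τ.trans σ)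
      · intro τ hτ
        simp only [hfib, Finset.mem_coe, Finset.mem_filter] at hτ ⊢
        refine ⟨Finset.mem_univ _, ?_⟩
        have hmsτ : ms τ = ∑ i, (ℓ i : ℕ) • ({r₁ i} : Multiset F) := by
          rw [hfibroots ζ₁ τ hτ.2, hWroots ζ₁ r₁ hP₁]
        have hmap : ms (τ.trans σ) = (ms τ).map σ := by
          simp only [hms, mmap, Equiv.trans_apply]
        have hmsτσ : ms (τ.trans σ) = ∑ i, (ℓ i : ℕ) • ({r₂ i} : Multiset F) := by
          rw [hmap, hmsτ, mmap]
          apply Finset.sum_congr rfl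
          intro i _
          by_cases h0 : (ℓ i : ℕ) = 0
          · simp [h0]
          · rw [hσ i (by rw [hS, Finset.mem_filter]; exact ⟨Finset.mem_univ _, h0⟩)]
        have hTms : Multiset.map (T ζ₂) Finset.univ.val
            = ∑ i, (ℓ i : ℕ) • ({r₂ i} : Multiset F) := by
          rw [htuple ζ₂ (T ζ₂) (hT ζ₂ h₂), hWroots ζ₂ r₂ hP₂]
        calc Ψ (τ.trans σ) = pows d (Multiset.map (T ζ₂) Finset.univ.val) := by
              rw [hΨ]
              simp only []
              rw [hmsτσ, hTms]
          _ = ζ₂ := hTpows ζ₂ h₂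
      · intro τ₁ _ τ₂ _ hEq
        apply Equiv.ext
        intro y
        have := congrArg (fun e : Fin (Fintype.card F) ≃ F => σ.symm (e y)) hEq
        simpa using this
    have hconst : ∀ ζ₁ ∈ Wf, ∀ ζ₂ ∈ Wf, (fib ζ₁).card = (fib ζ₂).card :=
      fun ζ₁ h₁ ζ₂ h₂ => le_antisymm (hstep ζ₁ h₁ ζ₂ h₂) (hstep ζ₂ h₂ ζ₁ h₁)
    set τ₀ : Fin (Fintype.card F) ≃ F := (Fintype.equivFin F).symm with hτ₀
    have hζ₀ : Ψ τ₀ ∈ Wf := hmem τ₀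
    set c := (fib (Ψ τ₀)).card with hc
    have hfibcard : ∀ ζ ∈ Wf, (fib ζ).card = c := fun ζ h => hconst ζ h _ hζ₀
    have hNpos : 0 < Wf.card := Finset.card_pos.2 ⟨_, hζ₀⟩
    have htot : Wf.card * c = Nat.factorial (Fintype.card F) := by
      have h1 : (Finset.univ : Finset (Fin (Fintype.card F) ≃ F)).card
          = Nat.factorial (Fintype.card F) := by
        rw [Finset.card_univ, Fintype.card_equiv τ₀]
        simp
      rw [← h1, Finset.card_eq_sum_card_fiberwise (fun τ _ => hmem τ)]
      rw [Finset.sum_congr rfl (fun ζ h => hfibcard ζ h), Finset.sum_const, smul_eq_mul]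
    set v : (Fin d → F) → ℝ := fun ζ => ((Pzeta ζ).roots.map x).prod with hv
    have hLHS : ∑ ζ ∈ Wf, ‖∏ i, f (T ζ i)‖ ^ 2 = ∑ ζ ∈ Wf, v ζ := by
      apply Finset.sum_congr rfl
      intro ζ hζ
      rw [norm_prod, ← Finset.prod_pow]
      simp only [hv]
      rw [← htuple ζ (T ζ) (hT ζ hζ), Multiset.map_map]
      rfl
    have hsym : symSumF ℓ x = (c : ℝ) * ∑ ζ ∈ Wf, v ζ := by
      rw [symSumF]
      have hterm : ∀ τ : Fin (Fintype.card F) ≃ F,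
          (∏ i : Fin d, if h : (i : ℕ) < Fintype.card F
            then x (τ ⟨(i : ℕ), h⟩) ^ (ℓ i : ℕ) else 0)
          = ((ms τ).map x).prod := by
        intro τ
        simp only [hms]
        rw [mmap, mprod]
        apply Finset.prod_congr rfl
        intro i _
        rw [dif_pos (hembd i)]
      rw [Finset.sum_congr rfl (fun τ _ => hterm τ)]
      rw [← Finset.sum_fiberwise_of_maps_to (g := Ψ) (fun τ _ => hmem τ)]
      rw [Finset.mul_sum]
      apply Finset.sum_congr rfl
      intro ζ hζ
      have hin : ∀ τ ∈ Finset.univ.filter (fun τ => Ψ τ = ζ),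
          ((ms τ).map x).prod = v ζ := by
        intro τ hτ
        rw [Finset.mem_filter] at hτ
        rw [hfibroots ζ τ hτ.2]
      rw [Finset.sum_congr rfl hin, Finset.sum_const, nsmul_eq_mul]
      have : (Finset.univ.filter (fun τ => Ψ τ = ζ)).card = c := hfibcard ζ hζ
      rw [this]
    rw [hLHS, hsym]
    have hcast : (Nat.factorial (Fintype.card F) : ℝ) = (Wf.card : ℝ) * (c : ℝ) := by
      exact_mod_cast htot.symm
    rw [hcast]
    have hc0 : (c : ℝ) ≠ 0 := by
      have hcne : c ≠ 0 := by
        intro h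
        rw [h, mul_zero] at htot
        exact (Nat.factorial_pos _).ne' htot.symm
      exact_mod_cast hcne
    have hN0 : (Wf.card : ℝ) ≠ 0 := Nat.cast_ne_zero.2 hNpos.ne'
    field_simp
end MultisetAux
end

section
/- (Muirhead's inequality with full equality characterization for nonnegative variables.) Let d, q ∈ ℕ with d ≤ q, let x₁,…,x_q be nonnegative real numbers, and let ℓ, ℓ' ∈ P_d with ℓ ≤ ℓ' in the dominance order. Then Σ_ℓ(x) ≤ Σ_{ℓ'}(x), and equality holds if and only if at least one of the following conditions holds: (i) ℓ = ℓ'; (ii) x₁ = x₂ = … = x_q; (iii) at least q − ρ(ℓ') + 1 of the numbers x₁,…,x_q are zero (in which case both sides are zero); (iv) ρ(ℓ) = ρ(ℓ'), exactly k of the x_i are zero for some k ≤ q − ρ(ℓ'), and the remaining q − k positive numbers are all equal. -/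
open Finset

-- master: extend an injective-on-s map to a permutation
lemma exists_perm_of_injOn {n : ℕ} (s : Finset (Fin n)) (f : Fin n → Fin n)
    (hf : Set.InjOn f s) : ∃ τ : Equiv.Perm (Fin n), ∀ a ∈ s, τ a = f a := by
  classical
  have hcard : Fintype.card {a // a ∈ s} = Fintype.card {b // b ∈ s.image f} := by
    rw [Fintype.card_coe, Fintype.card_coe, Finset.card_image_of_injOn hf]
  let g : {a // a ∈ s} → {b // b ∈ s.image f} :=
    fun a => ⟨f a, Finset.mem_image_of_mem f a.2⟩
  have hginj : Function.Injective g := by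
    rintro ⟨a, ha⟩ ⟨b, hb⟩ hab
    have : f a = f b := congrArg Subtype.val hab
    exact Subtype.ext (hf ha hb this)
  have hgbij : Function.Bijective g :=
    (Fintype.bijective_iff_injective_and_card g).2 ⟨hginj, hcard⟩
  let e := Equiv.ofBijective g hgbij
  refine ⟨e.extendSubtype, fun a ha => ?_⟩
  rw [Equiv.extendSubtype_apply_of_mem e a ha]
  rfl

lemma exists_perm_pins {n : ℕ} (R S T : Finset (Fin n)) (φ : Fin n → Fin n)
    (hcard : S.card ≤ T.card) (hφinj : Set.InjOn φ R) (hdisj : Disjoint R S)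
    (hφT : ∀ a ∈ R, φ a ∉ T) :
    ∃ τ : Equiv.Perm (Fin n), (∀ a ∈ R, τ a = φ a) ∧ ∀ a ∈ S, τ a ∈ T := by
  classical
  have hcard' : Fintype.card {a // a ∈ S} ≤ Fintype.card {b // b ∈ T} := by
    rwa [Fintype.card_coe, Fintype.card_coe]
  obtain ⟨w⟩ := Function.Embedding.nonempty_of_card_le hcard'
  set f : Fin n → Fin n := fun a =>
    if h : a ∈ R then φ a else if h : a ∈ S then (w ⟨a, h⟩ : Fin n) else a with hfdef
  have hfR : ∀ a ∈ R, f a = φ a := fun a ha => by simp [hfdef, ha]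
  have hfS : ∀ a ∈ S, f a ∈ T := fun a ha => by
    have haR : a ∉ R := fun h => (Finset.disjoint_left.1 hdisj h) ha
    simp only [hfdef, dif_neg haR, dif_pos ha]
    exact (w ⟨a, ha⟩).2
  have hinj : Set.InjOn f (R ∪ S : Finset (Fin n)) := by
    intro a ha b hb hab
    simp only [Finset.coe_union, Set.mem_union, Finset.mem_coe] at ha hb
    have hSne : ∀ c ∈ S, c ∉ R := fun c hc h => (Finset.disjoint_left.1 hdisj h) hc
    rcases ha with ha | ha <;> rcases hb with hb | hb
    · exact hφinj ha hb (by rwa [hfR a ha, hfR b hb] at hab)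
    · exact absurd (hab ▸ hfS b hb) (by rw [hfR a ha]; exact hφT a ha)
    · have h1 : f a ∈ T := hfS a ha
      rw [hab, hfR b hb] at h1
      exact absurd h1 (hφT b hb)
    · have := hab
      rw [hfdef] at this
      simp only [dif_neg (hSne a ha), dif_pos ha, dif_neg (hSne b hb), dif_pos hb] at this
      have := w.injective (Subtype.ext this)
      exact congrArg Subtype.val this
  obtain ⟨τ, hτ⟩ := exists_perm_of_injOn (R ∪ S) f hinj
  refine ⟨τ, fun a ha => ?_, fun a ha => ?_⟩
  · rw [hτ a (Finset.mem_union_left _ ha), hfR a ha]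
  · rw [hτ a (Finset.mem_union_right _ ha)]; exact hfS a ha
open Finset
open scoped Classical

def rhoN {d : ℕ} (b : Fin d → ℕ) : ℕ := (univ.filter fun i => b i ≠ 0).card
noncomputable def nzc {q : ℕ} (x : Fin q → ℝ) : ℕ := (univ.filter fun i => x i ≠ 0).card

noncomputable def trm {d q : ℕ} (hdq : d ≤ q) (b : Fin d → ℕ) (x : Fin q → ℝ)
    (τ : Equiv.Perm (Fin q)) : ℝ := ∏ i : Fin d, x (τ (Fin.castLE hdq i)) ^ b i

noncomputable def sS {d q : ℕ} (hdq : d ≤ q) (b : Fin d → ℕ) (x : Fin q → ℝ) : ℝ :=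
  ∑ τ : Equiv.Perm (Fin q), trm hdq b x τ

lemma symSum_eq_sS {d q : ℕ} (hdq : d ≤ q) (ℓ : Fin d → Fin (d+1)) (x : Fin q → ℝ) :
    symSum d q ℓ x = sS hdq (fun i => (ℓ i : ℕ)) x := by
  unfold symSum sS trm
  refine Finset.sum_congr rfl fun τ _ => Finset.prod_congr rfl fun i _ => ?_
  rw [dif_pos (lt_of_lt_of_le i.2 hdq)]
  rfl

lemma sorted_supp {d : ℕ} {b : Fin d → ℕ} (hb : ∀ i j : Fin d, i ≤ j → b j ≤ b i)
    (i : Fin d) : b i ≠ 0 ↔ (i : ℕ) < rhoN b := by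
  classical
  constructor
  · intro hi
    have hsub : Finset.Iic i ⊆ univ.filter fun j => b j ≠ 0 := by
      intro j hj
      simp only [Finset.mem_Iic] at hj
      simp only [Finset.mem_filter, Finset.mem_univ, true_and]
      have := hb j i hj
      omega
    have := Finset.card_le_card hsub
    rw [Fin.card_Iic] at this
    unfold rhoN; omega
  · intro hi
    by_contra hbi
    have hsub : (univ.filter fun j => b j ≠ 0) ⊆ Finset.Iio i := by
      intro j hj
      simp only [Finset.mem_filter, Finset.mem_univ, true_and] at hj
      simp only [Finset.mem_Iio]
      by_contra h
      push_neg at h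
      have := hb i j h
      omega
    have := Finset.card_le_card hsub
    rw [Fin.card_Iio] at this
    unfold rhoN at hi; omega

variable {d q : ℕ} (hdq : d ≤ q) (b : Fin d → ℕ) (x : Fin q → ℝ)

lemma trm_nonneg (hx : ∀ i, 0 ≤ x i) (τ : Equiv.Perm (Fin q)) : 0 ≤ trm hdq b x τ :=
  Finset.prod_nonneg fun i _ => pow_nonneg (hx _) _

lemma sS_nonneg (hx : ∀ i, 0 ≤ x i) : 0 ≤ sS hdq b x :=
  Finset.sum_nonneg fun τ _ => trm_nonneg hdq b x hx τ

lemma trm_const {c : ℝ} (hc : ∀ i, x i ≠ 0 → x i = c) (τ : Equiv.Perm (Fin q)) :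
    trm hdq b x τ =
      if ∀ i, b i ≠ 0 → x (τ (Fin.castLE hdq i)) ≠ 0 then c ^ (∑ i, b i) else 0 := by
  classical
  by_cases h : ∀ i, b i ≠ 0 → x (τ (Fin.castLE hdq i)) ≠ 0
  · rw [if_pos h, ← Finset.prod_pow_eq_pow_sum]
    refine Finset.prod_congr rfl fun i _ => ?_
    by_cases hbi : b i = 0
    · rw [hbi, pow_zero, pow_zero]
    · rw [hc _ (h i hbi)]
  · rw [if_neg h]
    push_neg at h
    obtain ⟨i, hbi, hxi⟩ := h
    exact Finset.prod_eq_zero (Finset.mem_univ i) (by rw [hxi, zero_pow hbi])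

lemma exists_zero_of_lt (h : nzc x < rhoN b) (τ : Equiv.Perm (Fin q)) :
    ∃ i, b i ≠ 0 ∧ x (τ (Fin.castLE hdq i)) = 0 := by
  classical
  by_contra hcon
  push_neg at hcon
  have hinj : Function.Injective fun i : Fin d => τ (Fin.castLE hdq i) :=
    fun a b hab => Fin.castLE_injective hdq (τ.injective hab)
  have hsub : ((univ.filter fun i => b i ≠ 0).image fun i => τ (Fin.castLE hdq i)) ⊆
      univ.filter fun i => x i ≠ 0 := by
    intro a ha
    simp only [Finset.mem_image, Finset.mem_filter, Finset.mem_univ, true_and] at ha ⊢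
    obtain ⟨i, hi, rfl⟩ := ha
    exact hcon i hi
  have := Finset.card_le_card hsub
  rw [Finset.card_image_of_injective _ hinj] at this
  unfold rhoN nzc at h
  omega

lemma sS_zero (hlt : nzc x < rhoN b) : sS hdq b x = 0 := by
  refine Finset.sum_eq_zero fun τ _ => ?_
  obtain ⟨i, hbi, hxi⟩ := exists_zero_of_lt hdq b x hlt τ
  exact Finset.prod_eq_zero (Finset.mem_univ i) (by rw [hxi, zero_pow hbi])

lemma sS_pos (hx : ∀ i, 0 ≤ x i) (h : rhoN b ≤ nzc x) : 0 < sS hdq b x := by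
  classical
  have hcard : ((univ.filter fun i : Fin d => b i ≠ 0).image fun i => Fin.castLE hdq i).card
      ≤ (univ.filter fun i => x i ≠ 0).card := by
    rw [Finset.card_image_of_injective _ (Fin.castLE_injective hdq)]
    exact h
  obtain ⟨τ, -, hτ⟩ := exists_perm_pins ∅ _ _ id hcard (by simp) (by simp) (by simp)
  have hpos : 0 < trm hdq b x τ := by
    refine Finset.prod_pos fun i _ => ?_
    by_cases hbi : b i = 0
    · rw [hbi, pow_zero]; exact one_pos
    · refine pow_pos ?_ _
      have hmem : Fin.castLE hdq i ∈
          (univ.filter fun i : Fin d => b i ≠ 0).image fun i => Fin.castLE hdq i :=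
        Finset.mem_image_of_mem _ (by simp [hbi])
      have := hτ _ hmem
      simp only [Finset.mem_filter, Finset.mem_univ, true_and] at this
      exact lt_of_le_of_ne (hx _) (Ne.symm this)
  exact Finset.sum_pos' (fun τ' _ => trm_nonneg hdq b x hx τ') ⟨τ, Finset.mem_univ τ, hpos⟩

section Step

variable (J K : Fin d)

/-- single transfer -/
def transferV (b : Fin d → ℕ) (J K : Fin d) : Fin d → ℕ :=
  fun i => if i = J then b J - 1 else if i = K then b K + 1 else b i

noncomputable def Dfun (τ : Equiv.Perm (Fin q)) : ℝ :=
  (∏ i ∈ (univ.erase J).erase K, x (τ (Fin.castLE hdq i)) ^ b i) *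
    (x (τ (Fin.castLE hdq J)) ^ b K * x (τ (Fin.castLE hdq K)) ^ b K) *
    ((x (τ (Fin.castLE hdq J)) ^ (b J - b K - 1) - x (τ (Fin.castLE hdq K)) ^ (b J - b K - 1)) *
      (x (τ (Fin.castLE hdq J)) - x (τ (Fin.castLE hdq K))))

lemma ringid (A B C : ℝ) (r s : ℕ) :
    (C * (A ^ (r+s+1) * B ^ r) + C * (B ^ (r+s+1) * A ^ r)) -
      (C * (A ^ (r+s) * B ^ (r+1)) + C * (B ^ (r+s) * A ^ (r+1)))
    = C * (A ^ r * B ^ r) * ((A ^ s - B ^ s) * (A - B)) := by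
  ring

lemma prod_split (hJK : J ≠ K) (g : Fin d → ℝ) :
    ∏ i, g i = g J * g K * ∏ i ∈ (univ.erase J).erase K, g i := by
  rw [← Finset.mul_prod_erase univ g (Finset.mem_univ J),
    ← Finset.mul_prod_erase (univ.erase J) g
      (Finset.mem_erase.2 ⟨Ne.symm hJK, Finset.mem_univ K⟩), mul_assoc]

lemma step_main (hJK : J ≠ K) (h2 : b K + 2 ≤ b J) :
    2 * (sS hdq b x - sS hdq (transferV b J K) x) = ∑ τ : Equiv.Perm (Fin q), Dfun hdq b x J K τ := by
  classical
  set Jq := Fin.castLE hdq J with hJq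
  set Kq := Fin.castLE hdq K with hKq
  have hJKq : Jq ≠ Kq := fun h => hJK (Fin.castLE_injective hdq h)
  set σ := Equiv.swap Jq Kq with hσ
  have hswap : ∀ c : Fin d → ℕ, ∑ τ : Equiv.Perm (Fin q), trm hdq c x τ
      = ∑ τ : Equiv.Perm (Fin q), trm hdq c x (τ * σ) :=
    fun c => (Fintype.sum_equiv (Equiv.mulRight σ) _ _ (fun τ => rfl)).symm
  have hkey : ∀ c : Fin d → ℕ, 2 * sS hdq c x
      = ∑ τ : Equiv.Perm (Fin q), (trm hdq c x τ + trm hdq c x (τ * σ)) := by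
    intro c
    rw [Finset.sum_add_distrib, ← hswap c]
    unfold sS; ring
  rw [mul_sub, hkey, hkey, ← Finset.sum_sub_distrib]
  refine Finset.sum_congr rfl fun τ _ => ?_
  have hfix : ∀ i ∈ (univ.erase J).erase K, σ (Fin.castLE hdq i) = Fin.castLE hdq i := by
    intro i hi
    simp only [Finset.mem_erase, Finset.mem_univ, and_true] at hi
    exact Equiv.swap_apply_of_ne_of_ne
      (fun h => hi.2 (Fin.castLE_injective hdq h)) (fun h => hi.1 (Fin.castLE_injective hdq h))
  set A := x (τ Jq) with hA
  set B := x (τ Kq) with hB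
  set Cc := ∏ i ∈ (univ.erase J).erase K, x (τ (Fin.castLE hdq i)) ^ b i with hCc
  have hτσ : ∀ i : Fin d, (τ * σ) (Fin.castLE hdq i) = τ (σ (Fin.castLE hdq i)) := fun _ => rfl
  have e1 : trm hdq b x τ = Cc * (A ^ b J * B ^ b K) := by
    unfold trm
    rw [prod_split J K hJK]; ring
  have e2 : trm hdq b x (τ * σ) = Cc * (B ^ b J * A ^ b K) := by
    unfold trm
    rw [prod_split J K hJK]
    simp only [hτσ]
    rw [hσ, Equiv.swap_apply_left, Equiv.swap_apply_right]
    have : ∏ i ∈ (univ.erase J).erase K, x (τ (σ (Fin.castLE hdq i))) ^ b i = Cc :=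
      Finset.prod_congr rfl fun i hi => by rw [hfix i hi]
    rw [this]; ring
  have e3 : trm hdq (transferV b J K) x τ = Cc * (A ^ (b J - 1) * B ^ (b K + 1)) := by
    unfold trm
    rw [prod_split J K hJK]
    have hJ' : transferV b J K J = b J - 1 := by simp [transferV]
    have hK' : transferV b J K K = b K + 1 := by simp [transferV, hJK.symm ,Ne.symm hJK]
    have : ∏ i ∈ (univ.erase J).erase K, x (τ (Fin.castLE hdq i)) ^ (transferV b J K i) = Cc := by
      refine Finset.prod_congr rfl fun i hi => ?_
      simp only [Finset.mem_erase, Finset.mem_univ, and_true] at hi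
      simp [transferV, hi.1, hi.2]
    rw [hJ', hK', this]; ring
  have e4 : trm hdq (transferV b J K) x (τ * σ) = Cc * (B ^ (b J - 1) * A ^ (b K + 1)) := by
    unfold trm
    rw [prod_split J K hJK]
    simp only [hτσ]
    rw [hσ, Equiv.swap_apply_left, Equiv.swap_apply_right]
    have hJ' : transferV b J K J = b J - 1 := by simp [transferV]
    have hK' : transferV b J K K = b K + 1 := by simp [transferV, hJK.symm, Ne.symm hJK]
    have : ∏ i ∈ (univ.erase J).erase K, x (τ (σ (Fin.castLE hdq i))) ^ (transferV b J K i) = Cc := by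
      refine Finset.prod_congr rfl fun i hi => ?_
      rw [hfix i hi]
      simp only [Finset.mem_erase, Finset.mem_univ, and_true] at hi
      simp [transferV, hi.1, hi.2]
    rw [hJ', hK', this]; ring
  rw [e1, e2, e3, e4]
  obtain ⟨r, s, hr, hs, h1, h0⟩ : ∃ r s, b K = r ∧ b J - b K - 1 = s ∧ b J = r + s + 1 ∧
      b J - 1 = r + s := ⟨b K, b J - b K - 1, rfl, rfl, by omega, by omega⟩
  unfold Dfun
  rw [← hA, ← hB, ← hCc, hs, hr, h0, h1]
  have := ringid A B Cc r s
  rw [show r + 1 = r + 1 from rfl] at this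
  linarith [this]

end Step

lemma Dfun_nonneg (hx : ∀ i, 0 ≤ x i) (J K : Fin d) (τ : Equiv.Perm (Fin q)) :
    0 ≤ Dfun hdq b x J K τ := by
  unfold Dfun
  refine mul_nonneg (mul_nonneg (Finset.prod_nonneg fun i _ => pow_nonneg (hx _) _)
    (mul_nonneg (pow_nonneg (hx _) _) (pow_nonneg (hx _) _))) ?_
  rcases le_total (x (τ (Fin.castLE hdq K))) (x (τ (Fin.castLE hdq J))) with h | h
  · exact mul_nonneg (sub_nonneg.2 (pow_le_pow_left₀ (hx _) h _)) (sub_nonneg.2 h)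
  · rw [← neg_mul_neg]
    exact mul_nonneg (neg_nonneg.2 (sub_nonpos.2 (pow_le_pow_left₀ (hx _) h _)))
      (neg_nonneg.2 (sub_nonpos.2 h))

lemma step_le (hx : ∀ i, 0 ≤ x i) {J K : Fin d} (hJK : J ≠ K) (h2 : b K + 2 ≤ b J) :
    sS hdq (transferV b J K) x ≤ sS hdq b x := by
  have h := step_main hdq b x J K hJK h2
  have h0 : 0 ≤ ∑ τ : Equiv.Perm (Fin q), Dfun hdq b x J K τ :=
    Finset.sum_nonneg fun τ _ => Dfun_nonneg hdq b x hx J K τ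
  linarith

lemma step_eq (hx : ∀ i, 0 ≤ x i) {J K : Fin d} (hJK : J ≠ K) (h2 : b K + 2 ≤ b J)
    (heq : sS hdq (transferV b J K) x = sS hdq b x) (τ : Equiv.Perm (Fin q)) :
    Dfun hdq b x J K τ = 0 := by
  have h := step_main hdq b x J K hJK h2
  rw [heq, sub_self, mul_zero] at h
  exact (Finset.sum_eq_zero_iff_of_nonneg
    (fun τ' _ => Dfun_nonneg hdq b x hx J K τ')).1 h.symm τ (Finset.mem_univ τ)

section Comb

variable {d : ℕ}

def NSorted (b : Fin d → ℕ) : Prop := ∀ i j : Fin d, i ≤ j → b j ≤ b i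

def NP (b : Fin d → ℕ) (k : Fin d) : ℕ := ∑ i ∈ univ.filter (· ≤ k), b i

def NDom (a b : Fin d → ℕ) : Prop := ∀ k, NP a k ≤ NP b k

def Phi (a b : Fin d → ℕ) : ℕ := ∑ k : Fin d, (NP b k - NP a k)

lemma sum_split2 {M : Type*} [AddCommMonoid M] (s : Finset (Fin d)) {J K : Fin d}
    (hJ : J ∈ s) (hK : K ∈ s) (hJK : J ≠ K) (g : Fin d → M) :
    ∑ i ∈ s, g i = g J + g K + ∑ i ∈ (s.erase J).erase K, g i := by
  rw [← Finset.add_sum_erase s g hJ,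
    ← Finset.add_sum_erase (s.erase J) g (Finset.mem_erase.2 ⟨Ne.symm hJK, hK⟩), add_assoc]

lemma NP_split (b : Fin d → ℕ) {k J : Fin d} (hJ : J ≤ k) :
    NP b k = b J + ∑ i ∈ (univ.filter (· ≤ k)).erase J, b i :=
  (Finset.add_sum_erase _ b (by simp [hJ])).symm

lemma min_diff {a b : Fin d → ℕ} (hd : NDom a b) (hne : a ≠ b) :
    ∃ j, a j < b j ∧ ∀ i, i < j → a i = b i := by
  classical
  have hne' : (univ.filter fun i => a i ≠ b i).Nonempty := by
    obtain ⟨i, hi⟩ := Function.ne_iff.1 hne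
    exact ⟨i, by simp [hi]⟩
  set j := (univ.filter fun i => a i ≠ b i).min' hne' with hjdef
  have hjmem : a j ≠ b j := by
    have := Finset.min'_mem _ hne'
    simpa using this
  have hlt : ∀ i, i < j → a i = b i := by
    intro i hi
    by_contra hcon
    have := Finset.min'_le (univ.filter fun i => a i ≠ b i) i (Finset.mem_filter.2 ⟨Finset.mem_univ i, hcon⟩)
    rw [← hjdef] at this
    exact absurd hi (not_lt.2 this)
  refine ⟨j, ?_, hlt⟩
  have h1 := hd j
  rw [NP_split a (le_refl j), NP_split b (le_refl j)] at h1
  have h2 : ∑ i ∈ (univ.filter (· ≤ j)).erase j, a i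
      = ∑ i ∈ (univ.filter (· ≤ j)).erase j, b i := by
    refine Finset.sum_congr rfl fun i hi => ?_
    simp only [Finset.mem_erase, Finset.mem_filter, Finset.mem_univ, true_and] at hi
    exact hlt i (lt_of_le_of_ne hi.2 hi.1)
  omega

lemma exists_transfer {a b : Fin d → ℕ} (has : NSorted a) (hbs : NSorted b)
    (hsa : ∑ i, a i = ∑ i, b i) (hd : NDom a b) (hne : a ≠ b) :
    ∃ J K : Fin d, J ≠ K ∧ b K + 2 ≤ b J ∧
      NSorted (transferV b J K) ∧ (∑ i, transferV b J K i = ∑ i, b i) ∧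
      NDom a (transferV b J K) ∧ NDom (transferV b J K) b ∧
      Phi a (transferV b J K) < Phi a b := by
  classical
  obtain ⟨j, hj, hjlt⟩ := min_diff hd hne
  -- the set where b < a
  have hkne : (univ.filter fun i => b i < a i).Nonempty := by
    by_contra hcon
    rw [Finset.not_nonempty_iff_eq_empty, Finset.filter_eq_empty_iff] at hcon
    have hle : ∀ i : Fin d, a i ≤ b i := fun i => not_lt.1 (hcon (Finset.mem_univ i))
    have : ∑ i, a i < ∑ i, b i :=
      Finset.sum_lt_sum (fun i _ => hle i) ⟨j, Finset.mem_univ j, hj⟩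
    omega
  set k := (univ.filter fun i => b i < a i).min' hkne with hkdef
  have hk : b k < a k := by have := Finset.min'_mem _ hkne; simpa using this
  have hklt : ∀ i, i < k → a i ≤ b i := by
    intro i hi
    by_contra hcon
    have := Finset.min'_le (univ.filter fun i => b i < a i) i (Finset.mem_filter.2 ⟨Finset.mem_univ i, by omega⟩)
    rw [← hkdef] at this
    exact absurd hi (not_lt.2 this)
  have hjk : j < k := by
    rcases lt_trichotomy j k with h | h | h
    · exact h
    · rw [h] at hj; omega
    · have := hjlt k h; omega
  -- J : bottom of the block of b j ; K : top of the block of b k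
  have hJne : (univ.filter fun i => b i = b j).Nonempty := ⟨j, by simp⟩
  set J := (univ.filter fun i => b i = b j).max' hJne with hJdef
  have hJ : b J = b j := by have := Finset.max'_mem _ hJne; simpa using this
  have hJmax : ∀ i, b i = b j → i ≤ J := fun i hi => Finset.le_max' _ i (by simp [hi])
  have hKne : (univ.filter fun i => b i = b k).Nonempty := ⟨k, by simp⟩
  set K := (univ.filter fun i => b i = b k).min' hKne with hKdef
  have hK : b K = b k := by have := Finset.min'_mem _ hKne; simpa using this
  have hKmin : ∀ i, b i = b k → K ≤ i := fun i hi => Finset.min'_le _ i (by simp [hi])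
  have hKk : K ≤ k := hKmin k rfl
  have h2 : b K + 2 ≤ b J := by
    have h3 : a k ≤ a j := has j k hjk.le
    omega
  have hJK : J < K := by
    by_contra hcon
    push_neg at hcon
    have := hbs K J hcon
    omega
  have hgtJ : ∀ i, J < i → b i < b J := by
    intro i hi
    have h1 : b i ≤ b J := hbs J i hi.le
    rcases eq_or_lt_of_le h1 with h | h
    · exact absurd (hJmax i (by omega)) (not_le.2 hi)
    · exact h
  have hltK : ∀ i, i < K → b K < b i := by
    intro i hi
    have h1 : b K ≤ b i := hbs i K hi.le
    rcases eq_or_lt_of_le h1 with h | h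
    · exact absurd (hKmin i (by omega)) (not_le.2 hi)
    · exact h
  have haleb : ∀ i, i < K → a i ≤ b i := fun i hi => hklt i (lt_of_lt_of_le hi hKk)
  set μ := transferV b J K with hμdef
  have hμJ : μ J = b J - 1 := by simp [hμdef, transferV]
  have hμK : μ K = b K + 1 := by simp [hμdef, transferV, hJK.ne', hJK.ne]
  have hμo : ∀ i, i ≠ J → i ≠ K → μ i = b i := by
    intro i h1 h3
    simp [hμdef, transferV, h1, h3]
  -- sortedness of μ
  have hμs : NSorted μ := by
    intro i₁ i₂ h12
    rcases eq_or_ne i₁ J with rfl | h1J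
    · rcases eq_or_ne i₂ J with rfl | h2J
      · exact le_refl _
      · rcases eq_or_ne i₂ K with rfl | h2K
        · omega
        · have := hgtJ i₂ (lt_of_le_of_ne h12 (Ne.symm h2J))
          rw [hμo i₂ h2J h2K, hμJ]
          omega
    · rcases eq_or_ne i₁ K with rfl | h1K
      · rcases eq_or_ne i₂ K with rfl | h2K
        · exact le_refl _
        · have h2J : i₂ ≠ J := by
            intro h; subst h; exact absurd (lt_of_lt_of_le hJK h12) (lt_irrefl _)
          have : b i₂ ≤ b K := hbs K i₂ h12
          rw [hμo i₂ h2J h2K, hμK]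
          omega
      · -- i₁ ∉ {J, K}
        rcases eq_or_ne i₂ J with rfl | h2J
        · have : i₁ < J := lt_of_le_of_ne h12 h1J
          have hb : b J ≤ b i₁ := hbs i₁ J h12
          rw [hμo i₁ h1J h1K, hμJ]
          omega
        · rcases eq_or_ne i₂ K with rfl | h2K
          · have : i₁ < K := lt_of_le_of_ne h12 h1K
            have := hltK i₁ this
            rw [hμo i₁ h1J h1K, hμK]
            omega
          · rw [hμo i₁ h1J h1K, hμo i₂ h2J h2K]
            exact hbs i₁ i₂ h12
  -- sum of μ
  have hμsum : ∑ i, μ i = ∑ i, b i := by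
    rw [sum_split2 univ (Finset.mem_univ J) (Finset.mem_univ K) hJK.ne μ,
      sum_split2 univ (Finset.mem_univ J) (Finset.mem_univ K) hJK.ne b, hμJ, hμK]
    have : ∑ i ∈ (univ.erase J).erase K, μ i = ∑ i ∈ (univ.erase J).erase K, b i := by
      refine Finset.sum_congr rfl fun i hi => ?_
      simp only [Finset.mem_erase, Finset.mem_univ, and_true] at hi
      exact hμo i hi.2 hi.1
    omega
  -- prefix sums of μ
  have hNPout : ∀ m : Fin d, (m < J ∨ K ≤ m) → NP μ m = NP b m := by
    intro m hm
    rcases hm with hm | hm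
    · refine Finset.sum_congr rfl fun i hi => ?_
      simp only [Finset.mem_filter, Finset.mem_univ, true_and] at hi
      have hiJ : i ≠ J := by intro h; subst h; exact absurd (lt_of_le_of_lt hi hm) (lt_irrefl _)
      have hiK : i ≠ K := by
        intro h; subst h
        exact absurd (lt_trans (lt_of_le_of_lt hi hm) hJK) (lt_irrefl _)
      exact hμo i hiJ hiK
    · have hJm : J ≤ m := le_trans hJK.le hm
      unfold NP
      rw [sum_split2 (univ.filter (· ≤ m)) (by simp [hJm]) (by simp [hm]) hJK.ne μ,
        sum_split2 (univ.filter (· ≤ m)) (by simp [hJm]) (by simp [hm]) hJK.ne b, hμJ, hμK]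
      have : ∑ i ∈ ((univ.filter (· ≤ m)).erase J).erase K, μ i
          = ∑ i ∈ ((univ.filter (· ≤ m)).erase J).erase K, b i := by
        refine Finset.sum_congr rfl fun i hi => ?_
        simp only [Finset.mem_erase, Finset.mem_filter, Finset.mem_univ, true_and] at hi
        exact hμo i hi.2.1 hi.1
      omega
  have hNPmid : ∀ m : Fin d, J ≤ m → m < K → NP μ m + 1 = NP b m := by
    intro m h1 h3
    rw [NP_split μ h1, NP_split b h1]
    have : ∑ i ∈ (univ.filter (· ≤ m)).erase J, μ i
        = ∑ i ∈ (univ.filter (· ≤ m)).erase J, b i := by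
      refine Finset.sum_congr rfl fun i hi => ?_
      simp only [Finset.mem_erase, Finset.mem_filter, Finset.mem_univ, true_and] at hi
      have hiK : i ≠ K := by
        intro h; subst h
        exact absurd (lt_of_le_of_lt hi.2 h3) (lt_irrefl _)
      exact hμo i hi.1 hiK
    rw [hμJ]
    omega
  have hstrict : ∀ m : Fin d, J ≤ m → m < K → NP a m < NP b m := by
    intro m h1 h3
    refine Finset.sum_lt_sum ?_ ⟨j, ?_, hj⟩
    · intro i hi
      simp only [Finset.mem_filter, Finset.mem_univ, true_and] at hi
      exact haleb i (lt_of_le_of_lt hi h3)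
    · have hjJ : j ≤ J := hJmax j rfl
      simp [le_trans hjJ h1]
  have hdom1 : NDom a μ := by
    intro m
    rcases lt_or_ge m J with hm | hm
    · rw [hNPout m (Or.inl hm)]; exact hd m
    · rcases lt_or_ge m K with hm2 | hm2
      · have := hNPmid m hm hm2
        have := hstrict m hm hm2
        omega
      · rw [hNPout m (Or.inr hm2)]; exact hd m
  have hdom2 : NDom μ b := by
    intro m
    rcases lt_or_ge m J with hm | hm
    · rw [hNPout m (Or.inl hm)]
    · rcases lt_or_ge m K with hm2 | hm2
      · have := hNPmid m hm hm2; omega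
      · rw [hNPout m (Or.inr hm2)]
  have hphi : Phi a μ < Phi a b := by
    refine Finset.sum_lt_sum ?_ ⟨J, Finset.mem_univ J, ?_⟩
    · intro m _
      have := hdom2 m
      have := hdom1 m
      have := hd m
      omega
    · have h1 := hNPmid J (le_refl J) hJK
      have h3 := hdom1 J
      have h4 := hstrict J (le_refl J) hJK
      omega
  exact ⟨J, K, hJK.ne, h2, hμs, hμsum, hdom1, hdom2, hphi⟩

end Comb

section Rho

variable {d : ℕ}

lemma rhoN_le (b : Fin d → ℕ) : rhoN b ≤ d := by
  have := Finset.card_filter_le univ (fun i => b i ≠ 0)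
  simpa [rhoN] using this

lemma rhoN_zero_iff {b : Fin d → ℕ} : rhoN b = 0 ↔ ∀ i, b i = 0 := by
  unfold rhoN
  rw [Finset.card_eq_zero, Finset.filter_eq_empty_iff]
  simp

lemma rhoN_transfer_pos {b : Fin d → ℕ} {J K : Fin d} (hJK : J ≠ K)
    (h2 : b K + 2 ≤ b J) (hbK : b K ≠ 0) : rhoN (transferV b J K) = rhoN b := by
  unfold rhoN
  congr 1
  apply Finset.filter_congr
  intro i _
  simp only [transferV]
  split_ifs with hiJ hiK
  · subst hiJ; constructor <;> intro <;> omega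
  · subst hiK; constructor <;> intro <;> omega
  · exact Iff.rfl

lemma rhoN_transfer_zero {b : Fin d → ℕ} {J K : Fin d} (hJK : J ≠ K)
    (h2 : b K + 2 ≤ b J) (hbK : b K = 0) : rhoN (transferV b J K) = rhoN b + 1 := by
  unfold rhoN
  have hset : (univ.filter fun i => transferV b J K i ≠ 0)
      = insert K (univ.filter fun i => b i ≠ 0) := by
    ext i
    simp only [Finset.mem_filter, Finset.mem_univ, true_and, Finset.mem_insert]
    simp only [transferV]
    split_ifs with hiJ hiK
    · subst hiJ
      constructor
      · intro _; right; omega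
      · intro _; omega
    · subst hiK
      constructor
      · intro _; left; rfl
      · intro _; omega
    · constructor
      · intro h; right; exact h
      · rintro (h | h)
        · exact absurd h hiK
        · exact h
  rw [hset, Finset.card_insert_of_notMem (by simp [hbK])]

lemma supp_subset_transfer {b : Fin d → ℕ} {J K : Fin d} (hJK : J ≠ K)
    (h2 : b K + 2 ≤ b J) : ∀ i, b i ≠ 0 → transferV b J K i ≠ 0 := by
  intro i hi
  simp only [transferV]
  split_ifs <;> omega

lemma transfer_K_ne {b : Fin d → ℕ} {J K : Fin d} (hJK : J ≠ K) :
    transferV b J K K ≠ 0 := by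
  simp [transferV, hJK.symm, Ne.symm hJK]

-- dominance decreases the number of nonzero parts
lemma rho_antitone {a b : Fin d → ℕ} (has : NSorted a) (hbs : NSorted b)
    (hsum : ∑ i, a i = ∑ i, b i) (hd : NDom a b) : rhoN b ≤ rhoN a := by
  classical
  rcases Nat.eq_zero_or_pos (rhoN a) with hra | hra
  · have ha0 : ∀ i, a i = 0 := rhoN_zero_iff.1 hra
    have : ∑ i, b i = 0 := by rw [← hsum]; simp [ha0]
    have hb0 : ∀ i, b i = 0 := by
      intro i
      exact Finset.sum_eq_zero_iff.1 this i (Finset.mem_univ i)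
    simp [rhoN_zero_iff.2 hb0, hra]
  · have hdpos : 0 < d := by
      rcases Nat.eq_zero_or_pos d with h | h
      · exfalso; have := rhoN_le a; omega
      · exact h
    have hmlt : rhoN a - 1 < d := by have := rhoN_le a; omega
    set m : Fin d := ⟨rhoN a - 1, hmlt⟩ with hm
    have hNPa : NP a m = ∑ i, a i := by
      unfold NP
      refine Finset.sum_subset (Finset.filter_subset _ _) ?_
      intro i _ hni
      simp only [Finset.mem_filter, Finset.mem_univ, true_and] at hni
      have : ¬ ((i : ℕ) < rhoN a) := by
        intro hcon
        exact hni (by rw [Fin.le_def]; simp [hm]; omega)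
      by_contra hai
      exact this ((sorted_supp has i).1 hai)
    have hNPb : NP b m ≤ ∑ i, b i := Finset.sum_le_sum_of_subset (Finset.filter_subset _ _)
    have hNPb' : NP b m = ∑ i, b i := le_antisymm hNPb (by rw [← hsum, ← hNPa]; exact hd m)
    have hbz : ∀ i : Fin d, ¬ (i ≤ m) → b i = 0 := by
      intro i hi
      have h0 : ∑ i ∈ univ \ univ.filter (· ≤ m), b i = 0 := by
        have := Finset.sum_filter_add_sum_filter_not univ (· ≤ m) b
        have h2 : univ \ univ.filter (· ≤ m) = univ.filter (fun i => ¬ i ≤ m) := by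
          ext; simp
        rw [h2]
        unfold NP at hNPb'
        omega
      refine Finset.sum_eq_zero_iff.1 h0 i ?_
      simp [hi]
    have hsupp : (univ.filter fun i => b i ≠ 0) ⊆ Finset.Iic m := by
      intro i hi
      simp only [Finset.mem_filter, Finset.mem_univ, true_and] at hi
      simp only [Finset.mem_Iic]
      by_contra h
      exact hi (hbz i h)
    have := Finset.card_le_card hsupp
    rw [Fin.card_Iic] at this
    have h1 : rhoN b ≤ (m : ℕ) + 1 := this
    have hmv : (m : ℕ) = rhoN a - 1 := rfl
    omega

end Rho

section Key

variable {d q : ℕ}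

set_option maxHeartbeats 2000000 in
lemma key_lemma (hdq : d ≤ q) (x : Fin q → ℝ) (hx : ∀ i, 0 ≤ x i) (n : ℕ) :
    ∀ a b : Fin d → ℕ, NSorted a → NSorted b → (∑ i, a i = ∑ i, b i) → NDom a b →
    Phi a b ≤ n →
    sS hdq a x ≤ sS hdq b x ∧
    (sS hdq a x = sS hdq b x → (¬ ∀ i j, x i = x j) → rhoN b ≤ nzc x → a ≠ b →
      rhoN a = rhoN b ∧ ∃ c, ∀ i, x i ≠ 0 → x i = c) := by
  classical
  induction n with
  | zero =>
    intro a b has hbs hsum hd hphi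
    have hab : a = b := by
      by_contra hab
      obtain ⟨j, hj, hjlt⟩ := min_diff hd hab
      have hstr : NP a j < NP b j := by
        rw [NP_split a (le_refl j), NP_split b (le_refl j)]
        have : ∑ i ∈ (univ.filter (· ≤ j)).erase j, a i
            = ∑ i ∈ (univ.filter (· ≤ j)).erase j, b i := by
          refine Finset.sum_congr rfl fun i hi => ?_
          simp only [Finset.mem_erase, Finset.mem_filter, Finset.mem_univ, true_and] at hi
          exact hjlt i (lt_of_le_of_ne hi.2 hi.1)
        omega
      have : 1 ≤ Phi a b := by
        have h1 : NP b j - NP a j ≤ Phi a b :=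
          Finset.single_le_sum (f := fun k => NP b k - NP a k) (fun k _ => Nat.zero_le _)
            (Finset.mem_univ j)
        omega
      omega
    subst hab
    exact ⟨le_refl _, fun _ _ _ hne => absurd rfl hne⟩
  | succ n ih =>
    intro a b has hbs hsum hd hphi
    by_cases hab : a = b
    · subst hab
      exact ⟨le_refl _, fun _ _ _ hne => absurd rfl hne⟩
    obtain ⟨J, K, hJK, h2, hμs, hμsum, hdom1, hdom2, hphide⟩ :=
      exists_transfer has hbs hsum hd hab
    set μ := transferV b J K with hμdef
    set Jq := Fin.castLE hdq J with hJqdef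
    set Kq := Fin.castLE hdq K with hKqdef
    have hJKq : Jq ≠ Kq := fun h => hJK (Fin.castLE_injective hdq h)
    have hih := ih a μ has hμs (by omega) hdom1 (by omega)
    have hstep : sS hdq μ x ≤ sS hdq b x := step_le hdq b x hx hJK h2
    have hle : sS hdq a x ≤ sS hdq b x := le_trans hih.1 hstep
    refine ⟨hle, ?_⟩
    intro heq hnall hrb hne
    have heq2 : sS hdq μ x = sS hdq b x := le_antisymm hstep (by rw [← heq]; exact hih.1)
    have heq1 : sS hdq a x = sS hdq μ x := by
      have := hih.1
      linarith [heq, heq2]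
    have hDzero : ∀ τ : Equiv.Perm (Fin q), Dfun hdq b x J K τ = 0 :=
      step_eq hdq b x hx hJK h2 heq2
    have hbpos : 0 < sS hdq b x := sS_pos hdq b x hx hrb
    have hμpos : 0 < sS hdq μ x := by rw [heq2]; exact hbpos
    have hrμ : rhoN μ ≤ nzc x := by
      by_contra hcon
      rw [sS_zero hdq μ x (by omega)] at hμpos
      exact absurd hμpos (lt_irrefl 0)
    -- all positive entries of x are equal
    have hbJ : b J ≠ 0 := by omega
    have hposeq : ∀ u v : Fin q, x u ≠ 0 → x v ≠ 0 → x u = x v := by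
      intro u v hu hv
      by_cases huv : u = v
      · rw [huv]
      -- permutation sending Jq ↦ u, Kq ↦ v, other positive positions into nonzeros
      set S := (((univ.filter fun i => b i ≠ 0).erase J).erase K).image (Fin.castLE hdq)
        with hSdef
      set T := ((univ.filter fun i => x i ≠ 0).erase u).erase v with hTdef
      set R : Finset (Fin q) := insert Jq {Kq} with hRdef
      have hcardS : S.card ≤ T.card := by
        have hSc : S.card = (((univ.filter fun i => b i ≠ 0).erase J).erase K).card :=
          Finset.card_image_of_injective _ (Fin.castLE_injective hdq)
        have hJmem : J ∈ univ.filter fun i => b i ≠ 0 := by simp [hbJ]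
        have hcard1 : ((univ.filter fun i => b i ≠ 0).erase J).card = rhoN b - 1 := by
          rw [Finset.card_erase_of_mem hJmem]
          rfl
        have hTc : T.card = nzc x - 2 := by
          have hv' : v ∈ (univ.filter fun i => x i ≠ 0).erase u :=
            Finset.mem_erase.2 ⟨fun h => huv h.symm, by simp [hv]⟩
          rw [hTdef, Finset.card_erase_of_mem hv',
            Finset.card_erase_of_mem (by simp [hu] : u ∈ univ.filter fun i => x i ≠ 0)]
          have : nzc x = (univ.filter fun i => x i ≠ 0).card := rfl
          omega
        by_cases hbK : b K = 0
        · have hKnm : K ∉ (univ.filter fun i => b i ≠ 0).erase J := by simp [hbK]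
          rw [hSc, Finset.erase_eq_of_notMem hKnm, hcard1, hTc]
          have hz := rhoN_transfer_zero hJK h2 hbK
          have hrμ' : rhoN (transferV b J K) ≤ nzc x := by rw [← hμdef]; exact hrμ
          omega
        · have hKm : K ∈ (univ.filter fun i => b i ≠ 0).erase J :=
            Finset.mem_erase.2 ⟨Ne.symm hJK, by simp [hbK]⟩
          rw [hSc, Finset.card_erase_of_mem hKm, hcard1, hTc]
          have h1 : rhoN b ≤ nzc x := hrb
          omega
      set φ : Fin q → Fin q := fun w => if w = Jq then u else v with hφdef
      have hφJ : φ Jq = u := by simp [hφdef]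
      have hφK : φ Kq = v := by simp [hφdef, hJKq.symm]
      have hinjφ : Set.InjOn φ R := by
        intro w1 h1 w2 h3 h12
        simp only [hRdef, Finset.coe_insert, Set.mem_insert_iff, Finset.coe_singleton,
          Set.mem_singleton_iff] at h1 h3
        rcases h1 with rfl | rfl <;> rcases h3 with rfl | rfl
        · rfl
        · rw [hφJ, hφK] at h12; exact absurd h12 huv
        · rw [hφJ, hφK] at h12; exact absurd h12.symm huv
        · rfl
      have hdisj : Disjoint R S := by
        rw [Finset.disjoint_left]
        intro w hw hwS
        simp only [hSdef, Finset.mem_image] at hwS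
        obtain ⟨i, hi, rfl⟩ := hwS
        simp only [Finset.mem_erase, Finset.mem_filter, Finset.mem_univ, true_and] at hi
        simp only [hRdef, Finset.mem_insert, Finset.mem_singleton] at hw
        rcases hw with h | h
        · exact hi.2.1 (Fin.castLE_injective hdq h)
        · exact hi.1 (Fin.castLE_injective hdq h)
      have hφT : ∀ w ∈ R, φ w ∉ T := by
        intro w hw
        simp only [hRdef, Finset.mem_insert, Finset.mem_singleton] at hw
        rcases hw with rfl | rfl
        · rw [hφJ]
          simp [hTdef]
        · rw [hφK]
          simp [hTdef]
      obtain ⟨τ, hτR, hτS⟩ := exists_perm_pins R S T φ hcardS hinjφ hdisj hφT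
      have hτJ : x (τ Jq) = x u := by
        rw [hτR Jq (Finset.mem_insert_self _ _), hφJ]
      have hτK : x (τ Kq) = x v := by
        rw [hτR Kq (by simp [hRdef]), hφK]
      have hD := hDzero τ
      unfold Dfun at hD
      rw [← hJqdef, ← hKqdef] at hD
      have hC : 0 < ∏ i ∈ (univ.erase J).erase K, x (τ (Fin.castLE hdq i)) ^ b i := by
        refine Finset.prod_pos fun i hi => ?_
        by_cases hbi : b i = 0
        · rw [hbi, pow_zero]; exact one_pos
        · simp only [Finset.mem_erase, Finset.mem_univ, and_true] at hi
          have hiS : Fin.castLE hdq i ∈ S := by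
            simp only [hSdef, Finset.mem_image]
            exact ⟨i, by simp [hi.1, hi.2, hbi], rfl⟩
          have := hτS _ hiS
          simp only [hTdef, Finset.mem_erase, Finset.mem_filter, Finset.mem_univ,
            true_and] at this
          exact pow_pos (lt_of_le_of_ne (hx _) (Ne.symm this.2.2)) _
      have hupos : 0 < x u := lt_of_le_of_ne (hx u) (Ne.symm hu)
      have hvpos : 0 < x v := lt_of_le_of_ne (hx v) (Ne.symm hv)
      rw [hτJ, hτK] at hD
      have hM : 0 < x u ^ b K * x v ^ b K := mul_pos (pow_pos hupos _) (pow_pos hvpos _)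
      have hP : (x u ^ (b J - b K - 1) - x v ^ (b J - b K - 1)) * (x u - x v) = 0 := by
        rcases mul_eq_zero.1 hD with h | h
        · rcases mul_eq_zero.1 h with h' | h'
          · exact absurd h' (ne_of_gt hC)
          · exact absurd h' (ne_of_gt hM)
        · exact h
      have hsne : b J - b K - 1 ≠ 0 := by omega
      rcases lt_trichotomy (x u) (x v) with h | h | h
      · have := pow_lt_pow_left₀ h (le_of_lt hupos) hsne
        have : 0 < (x v ^ (b J - b K - 1) - x u ^ (b J - b K - 1)) * (x v - x u) :=
          mul_pos (by linarith) (by linarith)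
        nlinarith [hP]
      · exact h
      · have := pow_lt_pow_left₀ h (le_of_lt hvpos) hsne
        have : 0 < (x u ^ (b J - b K - 1) - x v ^ (b J - b K - 1)) * (x u - x v) :=
          mul_pos (by linarith) (by linarith)
        nlinarith [hP]
    -- a constant value for the positive entries
    have hex : ∃ i₀ : Fin q, x i₀ ≠ 0 := by
      by_contra hcon
      push_neg at hcon
      exact hnall (fun i j => by rw [hcon i, hcon j])
    obtain ⟨i₀, hi₀⟩ := hex
    have hc : ∀ i, x i ≠ 0 → x i = x i₀ := fun i hi => hposeq i i₀ hi hi₀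
    -- ρ(μ) = ρ(b)
    have hρμb : rhoN μ = rhoN b := by
      by_cases hbK : b K ≠ 0
      · exact rhoN_transfer_pos hJK h2 hbK
      push_neg at hbK
      exfalso
      -- x has a zero entry
      have hzex : ∃ w, x w = 0 := by
        by_contra hcon
        push_neg at hcon
        exact hnall fun i j => by rw [hc i (hcon i), hc j (hcon j)]
      obtain ⟨w, hw⟩ := hzex
      -- build τ₀ with τ₀ Kq = w and positive positions of b to nonzeros
      set S := ((univ.filter fun i => b i ≠ 0)).image (Fin.castLE hdq) with hSdef
      set T := (univ.filter fun i => x i ≠ 0) with hTdef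
      have hcardS : S.card ≤ T.card := by
        rw [hSdef, Finset.card_image_of_injective _ (Fin.castLE_injective hdq)]
        exact hrb
      have hdisj : Disjoint ({Kq} : Finset (Fin q)) S := by
        rw [Finset.disjoint_left]
        intro w' hw' hwS
        simp only [Finset.mem_singleton] at hw'
        subst hw'
        simp only [hSdef, Finset.mem_image] at hwS
        obtain ⟨i, hi, hieq⟩ := hwS
        simp only [Finset.mem_filter, Finset.mem_univ, true_and] at hi
        have : i = K := Fin.castLE_injective hdq hieq
        subst this
        exact hi hbK
      obtain ⟨τ₀, hτ₀R, hτ₀S⟩ := exists_perm_pins {Kq} S T (fun _ => w) hcardS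
        (fun a ha b hb _ => by
          simp only [Finset.coe_singleton, Set.mem_singleton_iff] at ha hb
          rw [ha, hb])
        hdisj (by intro a ha; simp [hTdef, hw])
      have hτ₀K : x (τ₀ Kq) = 0 := by rw [hτ₀R Kq (Finset.mem_singleton_self Kq), hw]
      -- strict inequality sS μ < sS b
      have hcnn : 0 ≤ x i₀ := hx i₀
      have htermle : ∀ τ : Equiv.Perm (Fin q), trm hdq μ x τ ≤ trm hdq b x τ := by
        intro τ
        rw [trm_const hdq μ x hc τ, trm_const hdq b x hc τ]
        by_cases hcond : ∀ i, μ i ≠ 0 → x (τ (Fin.castLE hdq i)) ≠ 0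
        · rw [if_pos hcond, if_pos (fun i hi => hcond i (supp_subset_transfer hJK h2 i hi)),
            hμsum]
        · rw [if_neg hcond]
          split
          · exact pow_nonneg hcnn _
          · exact le_refl _
      have hstrict : trm hdq μ x τ₀ < trm hdq b x τ₀ := by
        have hμzero : trm hdq μ x τ₀ = 0 := by
          unfold trm
          refine Finset.prod_eq_zero (Finset.mem_univ K) ?_
          rw [← hKqdef, hτ₀K]
          exact zero_pow (transfer_K_ne hJK)
        have hbposτ : 0 < trm hdq b x τ₀ := by
          unfold trm
          refine Finset.prod_pos fun i _ => ?_
          by_cases hbi : b i = 0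
          · rw [hbi, pow_zero]; exact one_pos
          · have hiS : Fin.castLE hdq i ∈ S := by
              simp only [hSdef, Finset.mem_image]
              exact ⟨i, by simp [hbi], rfl⟩
            have := hτ₀S _ hiS
            simp only [hTdef, Finset.mem_filter, Finset.mem_univ, true_and] at this
            exact pow_pos (lt_of_le_of_ne (hx _) (Ne.symm this)) _
        rw [hμzero]
        exact hbposτ
      have : sS hdq μ x < sS hdq b x :=
        Finset.sum_lt_sum (fun τ _ => htermle τ) ⟨τ₀, Finset.mem_univ τ₀, hstrict⟩
      rw [heq2] at this
      exact absurd this (lt_irrefl _)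
    by_cases haμ : a = μ
    · rw [haμ, hρμb]
      exact ⟨rfl, x i₀, hc⟩
    · obtain ⟨h1, -⟩ := hih.2 heq1 hnall hrμ haμ
      exact ⟨h1.trans hρμb, x i₀, hc⟩

end Key


lemma zc_add_nzc {q : ℕ} (x : Fin q → ℝ) :
    (univ.filter fun i => x i = 0).card + nzc x = q := by
  classical
  have h := Finset.card_filter_add_card_filter_not
    (s := (univ : Finset (Fin q))) (p := fun i => x i = 0)
  rw [Finset.card_univ, Fintype.card_fin] at h
  have h2 : nzc x = (univ.filter fun i => ¬ x i = 0).card := by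
    unfold nzc
    congr 1
  omega

lemma sS_allEq {d q : ℕ} (hdq : d ≤ q) (x : Fin q → ℝ) (hall : ∀ i j, x i = x j)
    (a b : Fin d → ℕ) (hsum : ∑ i, a i = ∑ i, b i) : sS hdq a x = sS hdq b x := by
  rcases Nat.eq_zero_or_pos q with hq | hq
  · have hab : a = b := funext fun i => absurd i.2 (by omega)
    rw [hab]
  · have htrm : ∀ c : Fin d → ℕ, ∀ τ : Equiv.Perm (Fin q),
        trm hdq c x τ = x ⟨0, hq⟩ ^ (∑ i, c i) := by
      intro c τ
      unfold trm
      rw [← Finset.prod_pow_eq_pow_sum]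
      exact Finset.prod_congr rfl fun i _ => by rw [hall (τ (Fin.castLE hdq i)) ⟨0, hq⟩]
    unfold sS
    refine Finset.sum_congr rfl fun τ _ => ?_
    rw [htrm a τ, htrm b τ, hsum]

open scoped Classical in
theorem muirhead_with_equality_cases
    {d q : ℕ} (hdq : d ≤ q) (x : Fin q → ℝ) (hx : ∀ i, 0 ≤ x i)
    (ℓ ℓ' : Fin d → Fin (d + 1)) (hℓ : ℓ ∈ Pd d) (hℓ' : ℓ' ∈ Pd d)
    (hdom : domLE ℓ ℓ') :
    symSum d q ℓ x ≤ symSum d q ℓ' x ∧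
    (symSum d q ℓ x = symSum d q ℓ' x ↔
      ℓ = ℓ' ∨
      (∀ i j, x i = x j) ∨
      (q - rho ℓ' + 1 ≤ (univ.filter fun i => x i = 0).card) ∨
      (rho ℓ = rho ℓ' ∧ (univ.filter fun i => x i = 0).card ≤ q - rho ℓ' ∧
        ∃ c : ℝ, ∀ i, x i ≠ 0 → x i = c)) := by
  classical
  rw [Pd, Finset.mem_filter] at hℓ hℓ'
  obtain ⟨-, hLs, hLsum⟩ := hℓ
  obtain ⟨-, hL's, hL'sum⟩ := hℓ'
  have hsum' : ∑ i, (ℓ i : ℕ) = ∑ i, (ℓ' i : ℕ) := by rw [hLsum, hL'sum]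
  have hdom' : NDom (fun i => (ℓ i : ℕ)) (fun i => (ℓ' i : ℕ)) := fun k => hdom k
  have hkey := key_lemma hdq x hx (Phi (fun i => (ℓ i : ℕ)) (fun i => (ℓ' i : ℕ)))
    (fun i => (ℓ i : ℕ)) (fun i => (ℓ' i : ℕ)) hLs hL's hsum' hdom' (le_refl _)
  have hqz := zc_add_nzc x
  have hρ'd : rhoN (fun i => (ℓ' i : ℕ)) ≤ d := rhoN_le _
  have hρℓ' : rho ℓ' = rhoN (fun i => (ℓ' i : ℕ)) := rfl
  have hρℓ : rho ℓ = rhoN (fun i => (ℓ i : ℕ)) := rfl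
  rw [symSum_eq_sS hdq ℓ x, symSum_eq_sS hdq ℓ' x]
  refine ⟨hkey.1, ?_, ?_⟩
  · -- equality implies one of the four cases
    intro heq
    by_cases h1 : ℓ = ℓ'
    · exact Or.inl h1
    by_cases h2 : ∀ i j, x i = x j
    · exact Or.inr (Or.inl h2)
    by_cases h3 : q - rho ℓ' + 1 ≤ (univ.filter fun i => x i = 0).card
    · exact Or.inr (Or.inr (Or.inl h3))
    push_neg at h3
    refine Or.inr (Or.inr (Or.inr ?_))
    have hrb : rhoN (fun i => (ℓ' i : ℕ)) ≤ nzc x := by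
      rw [← hρℓ'] at hρ'd ⊢
      omega
    have hLne : (fun i => ((ℓ i : ℕ))) ≠ (fun i => ((ℓ' i : ℕ))) := by
      intro h
      exact h1 (funext fun i => Fin.val_injective (congrFun h i))
    obtain ⟨hρeq, c, hc⟩ := hkey.2 heq h2 hrb hLne
    refine ⟨hρeq, by rw [hρℓ'] at *; omega, c, hc⟩
  · -- each of the four cases implies equality
    rintro (h | h | h | h)
    · rw [h]
    · exact sS_allEq hdq x h _ _ hsum'
    · -- both sides vanish
      by_cases hd0 : d = 0
      · have : ℓ = ℓ' := funext fun i => absurd i.2 (by omega)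
        rw [this]
      · have hρ'pos : 1 ≤ rhoN (fun i => (ℓ' i : ℕ)) := by
          by_contra hcon
          have h0 : rhoN (fun i => (ℓ' i : ℕ)) = 0 := by omega
          have := rhoN_zero_iff.1 h0
          have : (d : ℕ) = 0 := by
            rw [← hL'sum]
            exact Finset.sum_eq_zero fun i _ => this i
          exact hd0 this
        have hρρ : rhoN (fun i => (ℓ' i : ℕ)) ≤ rhoN (fun i => (ℓ i : ℕ)) :=
          rho_antitone hLs hL's hsum' hdom'
        rw [hρℓ'] at *
        rw [sS_zero hdq _ x (by omega), sS_zero hdq _ x (by omega)]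
    · obtain ⟨hρ, hzc, c, hc⟩ := h
      unfold sS
      refine Finset.sum_congr rfl fun τ _ => ?_
      rw [trm_const hdq _ x hc τ, trm_const hdq _ x hc τ]
      have hρeq : rhoN (fun i => (ℓ i : ℕ)) = rhoN (fun i => (ℓ' i : ℕ)) := hρ
      have hsupp : ∀ i : Fin d,
          ((fun i => (ℓ i : ℕ)) i ≠ 0 ↔ (fun i => (ℓ' i : ℕ)) i ≠ 0) := by
        intro i
        rw [sorted_supp hLs i, sorted_supp hL's i, hρeq]
      rw [hsum']
      exact if_congr (forall_congr' fun i => imp_congr (hsupp i) Iff.rfl) rfl rfl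
end

section
/- (Strassen's theorem.) Let A and B be disjoint finite sets, let w : A ∪ B → [0,∞) be a weight function with Σ_{a∈A} w(a) = Σ_{b∈B} w(b), and let E ⊆ A × B be a set of edges. Then the following are equivalent: (i) for every U ⊆ A, Σ_{a∈U} w(a) ≤ Σ_{b∈N(U)} w(b), where N(U) = {b ∈ B : (a,b) ∈ E for some a ∈ U}; (ii) there exists τ : A × B → [0,∞) with τ(a,b) = 0 whenever (a,b) ∉ E, such that Σ_{b∈B} τ(a,b) = w(a) for every a ∈ A and Σ_{a∈A} τ(a,b) = w(b) for every b ∈ B. -/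
open Finset

private lemma sum_if_sub {α : Type*} [DecidableEq α] (s : Finset α) (g : α → ℝ) (a₀ : α) (t : ℝ) :
    ∑ a ∈ s, (if a = a₀ then g a₀ - t else g a)
      = ∑ a ∈ s, g a - (if a₀ ∈ s then t else 0) := by
  have h : ∀ a ∈ s, (if a = a₀ then g a₀ - t else g a) = g a - (if a = a₀ then t else 0) := by
    intro a _
    split_ifs with h
    · rw [h]
    · simp
  rw [Finset.sum_congr rfl h, Finset.sum_sub_distrib, Finset.sum_ite_eq' s a₀ (fun _ => t)]

private lemma strassen_aux {A B : Type} [Fintype A] [Fintype B] [DecidableEq A] [DecidableEq B] :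
    ∀ (n : ℕ) (E : Finset (A × B)), E.card = n →
    ∀ (wA : A → ℝ) (wB : B → ℝ), (∀ a, 0 ≤ wA a) → (∀ b, 0 ≤ wB b) →
    (∑ a, wA a = ∑ b, wB b) →
    (∀ U : Finset A, ∑ a ∈ U, wA a ≤ ∑ b ∈ univ.filter (fun b => ∃ a ∈ U, (a, b) ∈ E), wB b) →
    ∃ τ : A × B → ℝ, (∀ e, 0 ≤ τ e) ∧ (∀ e, e ∉ E → τ e = 0) ∧
      (∀ a, ∑ b, τ (a, b) = wA a) ∧ (∀ b, ∑ a, τ (a, b) = wB b) := by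
  intro n
  induction n with
  | zero =>
    intro E hE wA wB hwA hwB hbal hall
    have hE0 : E = ∅ := Finset.card_eq_zero.mp hE
    subst hE0
    have h1 : ∑ a, wA a ≤ 0 := by
      have := hall univ
      simpa using this
    have hA : ∀ a, wA a = 0 := by
      have h2 : ∑ a, wA a = 0 := le_antisymm h1 (Finset.sum_nonneg fun a _ => hwA a)
      intro a
      exact (Finset.sum_eq_zero_iff_of_nonneg fun a _ => hwA a).mp h2 a (by simp)
    have hB : ∀ b, wB b = 0 := by
      have h2 : ∑ b, wB b = 0 := by rw [← hbal]; exact le_antisymm h1 (Finset.sum_nonneg fun a _ => hwA a)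
      intro b
      exact (Finset.sum_eq_zero_iff_of_nonneg fun b _ => hwB b).mp h2 b (by simp)
    exact ⟨0, fun e => le_refl 0, fun e _ => rfl,
      fun a => by simp [hA a], fun b => by simp [hB b]⟩
  | succ n ih =>
    intro E hE wA wB hwA hwB hbal hall
    obtain ⟨e, he⟩ : E.Nonempty := Finset.card_pos.mp (by omega)
    obtain ⟨a₀, b₀⟩ := e
    set E' := E.erase (a₀, b₀) with hE'
    have hE'card : E'.card = n := by
      rw [hE', Finset.card_erase_of_mem he, hE]; omega
    -- neighborhoods
    have hnbr_sub : ∀ U : Finset A,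
        univ.filter (fun b => ∃ a ∈ U, (a, b) ∈ E') ⊆ univ.filter (fun b => ∃ a ∈ U, (a, b) ∈ E) := by
      intro U b hb
      simp only [Finset.mem_filter, Finset.mem_univ, true_and] at hb ⊢
      obtain ⟨a, ha, hab⟩ := hb
      exact ⟨a, ha, Finset.mem_of_mem_erase hab⟩
    have hnbr_eq : ∀ U : Finset A, a₀ ∉ U →
        univ.filter (fun b => ∃ a ∈ U, (a, b) ∈ E) = univ.filter (fun b => ∃ a ∈ U, (a, b) ∈ E') := by
      intro U ha₀ 
      apply Finset.Subset.antisymm _ (hnbr_sub U)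
      intro b hb
      simp only [Finset.mem_filter, Finset.mem_univ, true_and] at hb ⊢
      obtain ⟨a, ha, hab⟩ := hb
      refine ⟨a, ha, Finset.mem_erase.mpr ⟨?_, hab⟩⟩
      intro hcon
      simp only [Prod.mk.injEq] at hcon; exact ha₀ (hcon.1 ▸ ha)
    -- the deficiency function and the amount t routed on (a₀, b₀)
    set f : Finset A → ℝ := fun U =>
      ∑ a ∈ U, wA a - ∑ b ∈ univ.filter (fun b => ∃ a ∈ U, (a, b) ∈ E'), wB b with hf
    set S : Finset (Finset A) := univ.filter (fun U : Finset A => a₀ ∈ U) with hS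
    have hSne : S.Nonempty := ⟨{a₀}, by simp [hS]⟩
    set t : ℝ := max (S.sup' hSne f) 0 with ht
    have ht0 : 0 ≤ t := le_max_right _ _
    -- (1) f U ≤ wA a₀ for a₀ ∈ U
    have hfa : ∀ U : Finset A, a₀ ∈ U → f U ≤ wA a₀ := by
      intro U hU
      have h1 := hall (U.erase a₀)
      have h2 : univ.filter (fun b => ∃ a ∈ U.erase a₀, (a, b) ∈ E)
          ⊆ univ.filter (fun b => ∃ a ∈ U, (a, b) ∈ E') := by
        intro b hb
        simp only [Finset.mem_filter, Finset.mem_univ, true_and] at hb ⊢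
        obtain ⟨a, ha, hab⟩ := hb
        refine ⟨a, Finset.mem_of_mem_erase ha, Finset.mem_erase.mpr ⟨?_, hab⟩⟩
        intro hcon
        simp only [Prod.mk.injEq] at hcon; exact (Finset.mem_erase.mp ha).1 hcon.1
      have h3 := Finset.sum_le_sum_of_subset_of_nonneg h2 (fun b _ _ => hwB b)
      have h4 : ∑ a ∈ U.erase a₀, wA a + wA a₀ = ∑ a ∈ U, wA a :=
        Finset.sum_erase_add U wA hU
      simp only [hf]
      linarith
    -- (2) f U ≤ wB b₀ for a₀ ∈ U
    have hfb : ∀ U : Finset A, a₀ ∈ U → f U ≤ wB b₀ := by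
      intro U hU
      have h1 := hall U
      have h2 : univ.filter (fun b => ∃ a ∈ U, (a, b) ∈ E)
          ⊆ insert b₀ (univ.filter (fun b => ∃ a ∈ U, (a, b) ∈ E')) := by
        intro b hb
        simp only [Finset.mem_filter, Finset.mem_univ, true_and, Finset.mem_insert] at hb ⊢
        obtain ⟨a, ha, hab⟩ := hb
        by_cases hc : (a, b) = (a₀, b₀)
        · simp only [Prod.mk.injEq] at hc; exact Or.inl hc.2
        · exact Or.inr ⟨a, ha, Finset.mem_erase.mpr ⟨hc, hab⟩⟩
      have h3 := Finset.sum_le_sum_of_subset_of_nonneg h2 (fun b _ _ => hwB b)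
      have h4 : ∑ b ∈ insert b₀ (univ.filter (fun b => ∃ a ∈ U, (a, b) ∈ E')), wB b
          ≤ wB b₀ + ∑ b ∈ univ.filter (fun b => ∃ a ∈ U, (a, b) ∈ E'), wB b := by
        by_cases hb₀ : b₀ ∈ univ.filter (fun b => ∃ a ∈ U, (a, b) ∈ E')
        · rw [Finset.insert_eq_self.mpr hb₀]; linarith [hwB b₀]
        · rw [Finset.sum_insert hb₀]
      simp only [hf]
      linarith
    -- (3) f U ≤ slack V for a₀ ∈ U, a₀ ∉ V, b₀ ∈ N(E, V)
    have hfs : ∀ U V : Finset A, a₀ ∈ U → a₀ ∉ V →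
        b₀ ∈ univ.filter (fun b => ∃ a ∈ V, (a, b) ∈ E) →
        f U ≤ ∑ b ∈ univ.filter (fun b => ∃ a ∈ V, (a, b) ∈ E), wB b - ∑ a ∈ V, wA a := by
      intro U V hU hV hb₀
      have hsub1 : univ.filter (fun b => ∃ a ∈ U ∪ V, (a, b) ∈ E)
          ⊆ (univ.filter (fun b => ∃ a ∈ U, (a, b) ∈ E')) ∪ (univ.filter (fun b => ∃ a ∈ V, (a, b) ∈ E)) := by
        intro b hb
        simp only [Finset.mem_filter, Finset.mem_univ, true_and, Finset.mem_union,
          Finset.mem_union] at hb ⊢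
        obtain ⟨a, ha, hab⟩ := hb
        by_cases hc : (a, b) = (a₀, b₀)
        · simp only [Prod.mk.injEq] at hc
          obtain ⟨h1, h2⟩ := hc
          subst h2
          simp only [Finset.mem_filter, Finset.mem_univ, true_and] at hb₀
          exact Or.inr hb₀
        · rcases ha with ha | ha
          · exact Or.inl ⟨a, ha, Finset.mem_erase.mpr ⟨hc, hab⟩⟩
          · exact Or.inr ⟨a, ha, hab⟩
      have hsub2 : univ.filter (fun b => ∃ a ∈ U ∩ V, (a, b) ∈ E)
          ⊆ (univ.filter (fun b => ∃ a ∈ U, (a, b) ∈ E')) ∩ (univ.filter (fun b => ∃ a ∈ V, (a, b) ∈ E)) := by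
        intro b hb
        simp only [Finset.mem_filter, Finset.mem_univ, true_and, Finset.mem_inter] at hb ⊢
        obtain ⟨a, ha, hab⟩ := hb
        have hne : (a, b) ≠ (a₀, b₀) := by
          intro hcon
          simp only [Prod.mk.injEq] at hcon; exact hV (hcon.1 ▸ ha.2)
        exact ⟨⟨a, ha.1, Finset.mem_erase.mpr ⟨hne, hab⟩⟩, ⟨a, ha.2, hab⟩⟩
      have h1 := hall (U ∪ V)
      have h2 := hall (U ∩ V)
      have h3 := Finset.sum_le_sum_of_subset_of_nonneg hsub1 (fun b _ _ => hwB b)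
      have h4 := Finset.sum_le_sum_of_subset_of_nonneg hsub2 (fun b _ _ => hwB b)
      have h5 : ∑ a ∈ U ∪ V, wA a + ∑ a ∈ U ∩ V, wA a = ∑ a ∈ U, wA a + ∑ a ∈ V, wA a :=
        Finset.sum_union_inter
      have h6 : ∑ b ∈ (univ.filter (fun b => ∃ a ∈ U, (a, b) ∈ E')) ∪ (univ.filter (fun b => ∃ a ∈ V, (a, b) ∈ E)), wB b
          + ∑ b ∈ (univ.filter (fun b => ∃ a ∈ U, (a, b) ∈ E')) ∩ (univ.filter (fun b => ∃ a ∈ V, (a, b) ∈ E)), wB b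
          = ∑ b ∈ univ.filter (fun b => ∃ a ∈ U, (a, b) ∈ E'), wB b
          + ∑ b ∈ univ.filter (fun b => ∃ a ∈ V, (a, b) ∈ E), wB b :=
        Finset.sum_union_inter
      simp only [hf]
      linarith
    -- bounds on t
    have hta : t ≤ wA a₀ := by
      rw [ht]
      exact max_le (Finset.sup'_le hSne f fun U hU => hfa U (by simpa [hS] using hU)) (hwA a₀)
    have htb : t ≤ wB b₀ := by
      rw [ht]
      exact max_le (Finset.sup'_le hSne f fun U hU => hfb U (by simpa [hS] using hU)) (hwB b₀)
    have htf : ∀ U : Finset A, a₀ ∈ U → f U ≤ t := by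
      intro U hU
      exact le_trans (Finset.le_sup' f (by simp [hS, hU])) (le_max_left _ _)
    have hts : ∀ V : Finset A, a₀ ∉ V →
        b₀ ∈ univ.filter (fun b => ∃ a ∈ V, (a, b) ∈ E) →
        t ≤ ∑ b ∈ univ.filter (fun b => ∃ a ∈ V, (a, b) ∈ E), wB b - ∑ a ∈ V, wA a := by
      intro V hV hb₀
      rw [ht]
      refine max_le (Finset.sup'_le hSne f fun U hU => hfs U V (by simpa [hS] using hU) hV hb₀) ?_
      have := hall V
      linarith
    -- the new weights
    set wA' : A → ℝ := fun a => if a = a₀ then wA a₀ - t else wA a with hwA'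
    set wB' : B → ℝ := fun b => if b = b₀ then wB b₀ - t else wB b with hwB'
    have hsumA' : ∀ U : Finset A, ∑ a ∈ U, wA' a = ∑ a ∈ U, wA a - (if a₀ ∈ U then t else 0) := by
      intro U
      rw [hwA']
      exact sum_if_sub U wA a₀ t
    have hsumB' : ∀ V : Finset B, ∑ b ∈ V, wB' b = ∑ b ∈ V, wB b - (if b₀ ∈ V then t else 0) := by
      intro V
      rw [hwB']
      exact sum_if_sub V wB b₀ t
    have hwA'n : ∀ a, 0 ≤ wA' a := by
      intro a
      simp only [hwA']
      split_ifs
      · linarith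
      · exact hwA a
    have hwB'n : ∀ b, 0 ≤ wB' b := by
      intro b
      simp only [hwB']
      split_ifs
      · linarith
      · exact hwB b
    have hbal' : ∑ a, wA' a = ∑ b, wB' b := by
      rw [hsumA' univ, hsumB' univ]
      simp [hbal]
    -- Hall for E'
    have hall' : ∀ U : Finset A, ∑ a ∈ U, wA' a ≤
        ∑ b ∈ univ.filter (fun b => ∃ a ∈ U, (a, b) ∈ E'), wB' b := by
      intro U
      rw [hsumA' U, hsumB' _]
      by_cases hU : a₀ ∈ U
      · by_cases hb : b₀ ∈ univ.filter (fun b => ∃ a ∈ U, (a, b) ∈ E')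
        · simp only [hU, hb, if_pos]
          have hsub : univ.filter (fun b => ∃ a ∈ U, (a, b) ∈ E)
              ⊆ univ.filter (fun b => ∃ a ∈ U, (a, b) ∈ E') := by
            intro b hbm
            simp only [Finset.mem_filter, Finset.mem_univ, true_and] at hbm ⊢
            obtain ⟨a, ha, hab⟩ := hbm
            by_cases hc : (a, b) = (a₀, b₀)
            · simp only [Prod.mk.injEq] at hc
              rw [hc.2]
              simpa only [Finset.mem_filter, Finset.mem_univ, true_and] using hb
            · exact ⟨a, ha, Finset.mem_erase.mpr ⟨hc, hab⟩⟩
          have := Finset.sum_le_sum_of_subset_of_nonneg hsub (fun b _ _ => hwB b)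
          have := hall U
          linarith
        · simp only [hU, hb, if_pos, if_neg, not_false_iff]
          have := htf U hU
          simp only [hf] at this
          linarith
      · simp only [hU, if_neg, not_false_iff]
        by_cases hb : b₀ ∈ univ.filter (fun b => ∃ a ∈ U, (a, b) ∈ E')
        · simp only [hb, if_pos]
          have hb2 : b₀ ∈ univ.filter (fun b => ∃ a ∈ U, (a, b) ∈ E) := hnbr_sub U hb
          have := hts U hU hb2
          rw [hnbr_eq U hU] at this
          linarith
        · simp only [hb, if_neg, not_false_iff]
          have := hall U
          rw [hnbr_eq U hU] at this
          linarith
    obtain ⟨τ', hτ'0, hτ'E, hτ'r, hτ'c⟩ := ih E' hE'card wA' wB' hwA'n hwB'n hbal' hall'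
    refine ⟨fun e => τ' e + (if e = (a₀, b₀) then t else 0), ?_, ?_, ?_, ?_⟩
    · intro e
      have := hτ'0 e
      dsimp only
      split_ifs <;> linarith
    · intro e heE
      dsimp only
      have h1 : e ∉ E' := fun hc => heE (Finset.mem_of_mem_erase hc)
      have h2 : e ≠ (a₀, b₀) := fun hc => heE (hc ▸ he)
      rw [hτ'E e h1, if_neg h2, add_zero]
    · intro a
      dsimp only
      rw [Finset.sum_add_distrib, hτ'r a]
      by_cases ha : a = a₀
      · subst ha
        have : ∀ b : B, (if (a, b) = (a, b₀) then t else 0) = (if b = b₀ then t else 0) := by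
          intro b; simp [Prod.ext_iff]
        rw [Finset.sum_congr rfl fun b _ => this b, Finset.sum_ite_eq' univ b₀ (fun _ => t)]
        simp [hwA']
      · have : ∀ b : B, (if (a, b) = (a₀, b₀) then t else 0) = 0 := by
          intro b; rw [if_neg]; simp [Prod.ext_iff, ha]
        rw [Finset.sum_congr rfl fun b _ => this b]
        simp [hwA', ha]
    · intro b
      dsimp only
      rw [Finset.sum_add_distrib, hτ'c b]
      by_cases hb : b = b₀
      · subst hb
        have : ∀ a : A, (if (a, b) = (a₀, b) then t else 0) = (if a = a₀ then t else 0) := by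
          intro a; simp [Prod.ext_iff]
        rw [Finset.sum_congr rfl fun a _ => this a, Finset.sum_ite_eq' univ a₀ (fun _ => t)]
        simp [hwB']
      · have : ∀ a : A, (if (a, b) = (a₀, b₀) then t else 0) = 0 := by
          intro a; rw [if_neg]; simp [Prod.ext_iff, hb]
        rw [Finset.sum_congr rfl fun a _ => this a]
        simp [hwB', hb]


theorem strassen_fractional_matching
    {A B : Type} [Fintype A] [Fintype B] [DecidableEq A] [DecidableEq B]
    (w : A ⊕ B → ℝ) (hw : ∀ v, 0 ≤ w v)
    (hbal : ∑ a : A, w (Sum.inl a) = ∑ b : B, w (Sum.inr b))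
    (E : Finset (A × B)) :
    (∀ U : Finset A,
      ∑ a ∈ U, w (Sum.inl a) ≤
        ∑ b ∈ univ.filter fun b => ∃ a ∈ U, (a, b) ∈ E, w (Sum.inr b)) ↔
    (∃ τ : A × B → ℝ, (∀ e, 0 ≤ τ e) ∧ (∀ e, e ∉ E → τ e = 0) ∧
      (∀ a : A, ∑ b : B, τ (a, b) = w (Sum.inl a)) ∧
      (∀ b : B, ∑ a : A, τ (a, b) = w (Sum.inr b))) := by
  constructor
  · intro hall
    exact strassen_aux E.card E rfl (fun a => w (Sum.inl a)) (fun b => w (Sum.inr b))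
      (fun a => hw _) (fun b => hw _) hbal hall
  · rintro ⟨τ, hτ0, hτE, hrow, hcol⟩ U
    have h1 : ∀ a ∈ U, w (Sum.inl a) = ∑ b ∈ univ.filter (fun b => ∃ a ∈ U, (a, b) ∈ E), τ (a, b) := by
      intro a ha
      rw [← hrow a]
      symm
      apply Finset.sum_subset (Finset.subset_univ _)
      intro b _ hb
      simp only [Finset.mem_filter, Finset.mem_univ, true_and] at hb
      apply hτE
      intro hmem
      exact hb ⟨a, ha, hmem⟩
    rw [Finset.sum_congr rfl h1, Finset.sum_comm]
    apply Finset.sum_le_sum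
    intro b _
    rw [← hcol b]
    apply Finset.sum_le_sum_of_subset_of_nonneg (Finset.subset_univ _)
    intro a _ _
    exact hτ0 _
end

section
/- Let d ≥ 2 and q ≥ d be integers and let ω : P_d → ℝ satisfy Σ_{ℓ∈P_d} ω_ℓ = 0. Set N = {ℓ ∈ P_d : ω_ℓ < 0} and P = {ℓ ∈ P_d : ω_ℓ ≥ 0}, and suppose that for every subset U ⊆ N one has Σ_{n∈U} (−ω_n) ≤ Σ { ω_p : p ∈ P and n ≤ p for some n ∈ U }. Then Σ_{ℓ∈P_d} ω_ℓ · Σ_ℓ(x) ≥ 0 for all nonnegative reals x₁,…,x_q. Moreover, if N ≠ ∅ and ω_{(d,0,…,0)} > 0, then equality holds if and only if x₁ = x₂ = … = x_q. -/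
open Finset

noncomputable def SSum {d q : ℕ} (hdq : d ≤ q) (e : Fin d → ℕ) (x : Fin q → ℝ) : ℝ :=
  ∑ τ : Equiv.Perm (Fin q), ∏ i : Fin d, x (τ (Fin.castLE hdq i)) ^ e i

lemma SSum_nonneg {d q : ℕ} (hdq : d ≤ q) (e : Fin d → ℕ) {x : Fin q → ℝ}
    (hx : ∀ i, 0 ≤ x i) : 0 ≤ SSum hdq e x := by
  apply Finset.sum_nonneg
  intro τ _
  exact Finset.prod_nonneg fun i _ => pow_nonneg (hx _) _

lemma key_ineq (u v : ℝ) (hu : 0 ≤ u) (hv : 0 ≤ v) (α β : ℕ) (h : β < α) :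
    u ^ (α - 1) * v ^ (β + 1) + v ^ (α - 1) * u ^ (β + 1)
      ≤ u ^ α * v ^ β + v ^ α * u ^ β := by
  obtain ⟨m, rfl⟩ : ∃ m, α = β + 1 + m := ⟨α - (β + 1), by omega⟩
  have h1 : β + 1 + m - 1 = β + m := by omega
  rw [h1]
  have key : 0 ≤ (u ^ m - v ^ m) * (u - v) := by
    rcases le_total u v with huv | huv
    · have := pow_le_pow_left₀ hu huv m
      nlinarith
    · have := pow_le_pow_left₀ hv huv m
      nlinarith
  have hb : 0 ≤ u ^ β * v ^ β := mul_nonneg (pow_nonneg hu β) (pow_nonneg hv β)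
  have expand : u ^ (β + 1 + m) * v ^ β + v ^ (β + 1 + m) * u ^ β
      - (u ^ (β + m) * v ^ (β + 1) + v ^ (β + m) * u ^ (β + 1))
      = (u ^ β * v ^ β) * ((u ^ m - v ^ m) * (u - v)) := by
    rw [pow_add, pow_add, pow_add, pow_add, pow_add, pow_add]
    ring
  nlinarith [mul_nonneg hb key]

lemma prod_split_s12 {d : ℕ} (e : Fin d → ℕ) (y : Fin d → ℝ) (i j : Fin d) (hij : i ≠ j) :
    ∏ k, y k ^ e k
      = y i ^ e i * y j ^ e j * ∏ k ∈ (univ.erase i).erase j, y k ^ e k := by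
  rw [mul_assoc, Finset.mul_prod_erase (univ.erase i) (fun k => y k ^ e k)
    (Finset.mem_erase.mpr ⟨hij.symm, mem_univ j⟩),
    Finset.mul_prod_erase univ (fun k => y k ^ e k) (mem_univ i)]

lemma transfer_le {d q : ℕ} (hdq : d ≤ q) {x : Fin q → ℝ} (hx : ∀ i, 0 ≤ x i)
    (e : Fin d → ℕ) (i j : Fin d) (hij : i ≠ j) (hlt : e j < e i) :
    SSum hdq (Function.update (Function.update e i (e i - 1)) j (e j + 1)) x
      ≤ SSum hdq e x := by
  classical
  set ι : Fin d → Fin q := Fin.castLE hdq with hι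
  have hιinj : Function.Injective ι := Fin.castLE_injective hdq
  set s : Equiv.Perm (Fin q) := Equiv.swap (ι i) (ι j) with hs
  set e' := Function.update (Function.update e i (e i - 1)) j (e j + 1) with he'
  have he'i : e' i = e i - 1 := by
    simp [he', Function.update_apply, hij]
  have he'j : e' j = e j + 1 := by simp [he']
  have he'k : ∀ k, k ≠ i → k ≠ j → e' k = e k := by
    intro k hki hkj
    simp [he', Function.update_apply, hki, hkj]
  set f : (Fin d → ℕ) → Equiv.Perm (Fin q) → ℝ :=
    fun e0 τ => ∏ k : Fin d, x (τ (ι k)) ^ e0 k with hf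
  have hcomp : ∀ e0 : Fin d → ℕ, ∑ τ : Equiv.Perm (Fin q), f e0 (τ * s)
      = ∑ τ : Equiv.Perm (Fin q), f e0 τ :=
    fun e0 => Equiv.sum_comp (Equiv.mulRight s) (f e0)
  have pertau : ∀ τ : Equiv.Perm (Fin q),
      f e' τ + f e' (τ * s) ≤ f e τ + f e (τ * s) := by
    intro τ
    have hys : ∀ k, k ≠ i → k ≠ j → (τ * s) (ι k) = τ (ι k) := by
      intro k hki hkj
      have : s (ι k) = ι k :=
        Equiv.swap_apply_of_ne_of_ne (fun h => hki (hιinj h)) (fun h => hkj (hιinj h))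
      simp [Equiv.Perm.mul_apply, this]
    have hyi : (τ * s) (ι i) = τ (ι j) := by
      simp [Equiv.Perm.mul_apply, hs, Equiv.swap_apply_left]
    have hyj : (τ * s) (ι j) = τ (ι i) := by
      simp [Equiv.Perm.mul_apply, hs, Equiv.swap_apply_right]
    set u := x (τ (ι i)) with hu
    set v := x (τ (ι j)) with hv
    set R := ∏ k ∈ (univ.erase i).erase j, x (τ (ι k)) ^ e k with hR
    have hmemR : ∀ k ∈ (univ.erase i).erase j, k ≠ i ∧ k ≠ j := by
      intro k hk
      simp only [Finset.mem_erase] at hk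
      exact ⟨hk.2.1, hk.1⟩
    have hfe : f e τ = u ^ e i * v ^ e j * R := prod_split_s12 e _ i j hij
    have hfes : f e (τ * s) = v ^ e i * u ^ e j * R := by
      have hb : f e (τ * s) = ∏ k : Fin d, x ((τ * s) (ι k)) ^ e k := rfl
      rw [hb, prod_split_s12 e (fun k => x ((τ * s) (ι k))) i j hij]
      rw [hyi, hyj]
      congr 1
      apply Finset.prod_congr rfl
      intro k hk
      rw [hys k (hmemR k hk).1 (hmemR k hk).2]
    have hRe' : ∏ k ∈ (univ.erase i).erase j, x (τ (ι k)) ^ e' k = R := by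
      apply Finset.prod_congr rfl
      intro k hk
      rw [he'k k (hmemR k hk).1 (hmemR k hk).2]
    have hfe' : f e' τ = u ^ (e i - 1) * v ^ (e j + 1) * R := by
      have hb : f e' τ = ∏ k : Fin d, x (τ (ι k)) ^ e' k := rfl
      rw [hb, prod_split_s12 e' _ i j hij, he'i, he'j, hRe']
    have hfes' : f e' (τ * s) = v ^ (e i - 1) * u ^ (e j + 1) * R := by
      have hb : f e' (τ * s) = ∏ k : Fin d, x ((τ * s) (ι k)) ^ e' k := rfl
      rw [hb, prod_split_s12 e' (fun k => x ((τ * s) (ι k))) i j hij, he'i, he'j, hyi, hyj]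
      congr 1
      apply Finset.prod_congr rfl
      intro k hk
      rw [hys k (hmemR k hk).1 (hmemR k hk).2, he'k k (hmemR k hk).1 (hmemR k hk).2]
    have hR0 : 0 ≤ R := Finset.prod_nonneg fun k _ => pow_nonneg (hx _) _
    have := key_ineq u v (hx _) (hx _) (e i) (e j) hlt
    rw [hfe, hfes, hfe', hfes']
    nlinarith
  have hsum : ∑ τ : Equiv.Perm (Fin q), (f e' τ + f e' (τ * s))
      ≤ ∑ τ : Equiv.Perm (Fin q), (f e τ + f e (τ * s)) :=
    Finset.sum_le_sum fun τ _ => pertau τ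
  rw [Finset.sum_add_distrib, Finset.sum_add_distrib, hcomp, hcomp] at hsum
  have hSS : ∀ e0 : Fin d → ℕ, SSum hdq e0 x = ∑ τ : Equiv.Perm (Fin q), f e0 τ :=
    fun e0 => rfl
  rw [hSS, hSS]
  linarith

def etopN (d : ℕ) : Fin d → ℕ := fun k => if (k : ℕ) = 0 then d else 0
def ecN (d : ℕ) : Fin d → ℕ :=
  fun k => if (k : ℕ) = 0 then d - 1 else if (k : ℕ) = 1 then 1 else 0

lemma SSum_ec_lt_top {d q : ℕ} (hd : 2 ≤ d) (hdq : d ≤ q) {x : Fin q → ℝ}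
    (hx : ∀ i, 0 ≤ x i) {a b : Fin q} (hab : x a ≠ x b) :
    SSum hdq (ecN d) x < SSum hdq (etopN d) x := by
  classical
  have h0 : 0 < d := by omega
  have h1 : 1 < d := by omega
  set i : Fin d := ⟨0, h0⟩ with hi
  set j : Fin d := ⟨1, h1⟩ with hj
  have hij : i ≠ j := by simp [hi, hj, Fin.ext_iff]
  set ι : Fin d → Fin q := Fin.castLE hdq with hι
  have hιinj : Function.Injective ι := Fin.castLE_injective hdq
  have hιij : ι i ≠ ι j := fun h => hij (hιinj h)
  set s : Equiv.Perm (Fin q) := Equiv.swap (ι i) (ι j) with hs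
  -- product formulas
  have prod_top : ∀ y : Fin d → ℝ, ∏ k, y k ^ etopN d k = y i ^ d := by
    intro y
    rw [prod_split_s12 (etopN d) y i j hij]
    have e1 : etopN d i = d := by simp [etopN, hi]
    have e2 : etopN d j = 0 := by simp [etopN, hj]
    have e3 : ∏ k ∈ (univ.erase i).erase j, y k ^ etopN d k = 1 := by
      apply Finset.prod_eq_one
      intro k hk
      simp only [Finset.mem_erase] at hk
      have : (k : ℕ) ≠ 0 := fun h => hk.2.1 (Fin.ext h)
      simp [etopN, this]
    rw [e1, e2, e3]; ring
  have prod_ec : ∀ y : Fin d → ℝ, ∏ k, y k ^ ecN d k = y i ^ (d - 1) * y j := by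
    intro y
    rw [prod_split_s12 (ecN d) y i j hij]
    have e1 : ecN d i = d - 1 := by simp [ecN, hi]
    have e2 : ecN d j = 1 := by simp [ecN, hj]
    have e3 : ∏ k ∈ (univ.erase i).erase j, y k ^ ecN d k = 1 := by
      apply Finset.prod_eq_one
      intro k hk
      simp only [Finset.mem_erase] at hk
      have k0 : (k : ℕ) ≠ 0 := fun h => hk.2.1 (Fin.ext h)
      have k1 : (k : ℕ) ≠ 1 := fun h => hk.1 (Fin.ext h)
      simp [ecN, k0, k1]
    rw [e1, e2, e3]; ring
  set f : (Fin d → ℕ) → Equiv.Perm (Fin q) → ℝ :=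
    fun e0 τ => ∏ k : Fin d, x (τ (ι k)) ^ e0 k with hf
  have hcomp : ∀ e0 : Fin d → ℕ, ∑ τ : Equiv.Perm (Fin q), f e0 (τ * s)
      = ∑ τ : Equiv.Perm (Fin q), f e0 τ :=
    fun e0 => Equiv.sum_comp (Equiv.mulRight s) (f e0)
  have hyi : ∀ τ : Equiv.Perm (Fin q), (τ * s) (ι i) = τ (ι j) := by
    intro τ; simp [Equiv.Perm.mul_apply, hs, Equiv.swap_apply_left]
  have hyj : ∀ τ : Equiv.Perm (Fin q), (τ * s) (ι j) = τ (ι i) := by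
    intro τ; simp [Equiv.Perm.mul_apply, hs, Equiv.swap_apply_right]
  -- per-τ values
  have ftop : ∀ τ, f (etopN d) τ = x (τ (ι i)) ^ d := fun τ => prod_top _
  have fec : ∀ τ, f (ecN d) τ = x (τ (ι i)) ^ (d - 1) * x (τ (ι j)) := fun τ => prod_ec _
  have pair_le : ∀ u v : ℝ, 0 ≤ u → 0 ≤ v →
      u ^ (d - 1) * v + v ^ (d - 1) * u ≤ u ^ d + v ^ d := by
    intro u v hu hv
    have := key_ineq u v hu hv d 0 h0
    simpa using this
  have pair_lt : ∀ u v : ℝ, 0 ≤ u → 0 ≤ v → u ≠ v →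
      u ^ (d - 1) * v + v ^ (d - 1) * u < u ^ d + v ^ d := by
    intro u v hu hv huv
    obtain ⟨m, hm⟩ : ∃ m, d = m + 1 := ⟨d - 1, by omega⟩
    have hm0 : m ≠ 0 := by omega
    have hd1 : d - 1 = m := by omega
    subst hm
    rw [hd1]
    have key : 0 < (u - v) * (u ^ m - v ^ m) := by
      rcases lt_or_gt_of_ne huv with h | h
      · have := pow_lt_pow_left₀ h hu hm0
        nlinarith
      · have := pow_lt_pow_left₀ h hv hm0
        nlinarith
    have eu : u ^ (m + 1) = u ^ m * u := pow_succ u m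
    have ev : v ^ (m + 1) = v ^ m * v := pow_succ v m
    nlinarith
  -- the witness permutation τ₀
  have hane : a ≠ b := fun h => hab (by rw [h])
  set σ : Equiv.Perm (Fin q) := Equiv.swap (ι i) a with hσ
  have hσib : σ⁻¹ b ≠ ι i := by
    intro h
    apply hane
    have : b = σ (ι i) := by rw [← h]; simp
    rw [this, hσ, Equiv.swap_apply_left]
  set τ₀ : Equiv.Perm (Fin q) := σ * Equiv.swap (ι j) (σ⁻¹ b) with hτ₀
  have hτ₀i : τ₀ (ι i) = a := by
    have h1 : (Equiv.swap (ι j) (σ⁻¹ b)) (ι i) = ι i :=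
      Equiv.swap_apply_of_ne_of_ne hιij hσib.symm
    rw [hτ₀, Equiv.Perm.mul_apply, h1, hσ, Equiv.swap_apply_left]
  have hτ₀j : τ₀ (ι j) = b := by
    rw [hτ₀]
    simp [Equiv.Perm.mul_apply, Equiv.swap_apply_left]
  -- strict sum comparison
  have hsum : ∑ τ : Equiv.Perm (Fin q), (f (ecN d) τ + f (ecN d) (τ * s))
      < ∑ τ : Equiv.Perm (Fin q), (f (etopN d) τ + f (etopN d) (τ * s)) := by
    apply Finset.sum_lt_sum
    · intro τ _
      rw [ftop, ftop, fec, fec, hyi, hyj]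
      have := pair_le (x (τ (ι i))) (x (τ (ι j))) (hx _) (hx _)
      linarith
    · refine ⟨τ₀, Finset.mem_univ _, ?_⟩
      rw [ftop, ftop, fec, fec, hyi, hyj, hτ₀i, hτ₀j]
      have := pair_lt (x a) (x b) (hx _) (hx _) hab
      linarith
  rw [Finset.sum_add_distrib, Finset.sum_add_distrib, hcomp, hcomp] at hsum
  have hSS : ∀ e0 : Fin d → ℕ, SSum hdq e0 x = ∑ τ : Equiv.Perm (Fin q), f e0 τ :=
    fun e0 => rfl
  rw [hSS, hSS]
  linarith

def Pre {d : ℕ} (e : Fin d → ℕ) (k : Fin d) : ℕ := ∑ m ∈ univ.filter (· ≤ k), e m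

lemma Pre_split {d : ℕ} (e : Fin d → ℕ) (k : Fin d) :
    Pre e k = e k + ∑ m ∈ univ.filter (· < k), e m := by
  classical
  have h : univ.filter (· ≤ k) = insert k (univ.filter (· < k)) := by
    ext m
    simp only [Finset.mem_filter, Finset.mem_insert, Finset.mem_univ, true_and]
    constructor
    · intro h; rcases lt_or_eq_of_le h with h | h
      · exact Or.inr (by simp [h])
      · exact Or.inl h
    · rintro (rfl | h)
      · exact le_refl _
      · exact le_of_lt (by simpa using h)
  rw [Pre, h, Finset.sum_insert (by simp)]

lemma Pre_update_of_le {d : ℕ} {e : Fin d → ℕ} {p k : Fin d} (h : p ≤ k) (t : ℕ) :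
    Pre (Function.update e p t) k + e p = Pre e k + t := by
  classical
  have hp : p ∈ univ.filter (· ≤ k) := by simp [h]
  unfold Pre
  rw [Finset.sum_update_of_mem hp, ← Finset.add_sum_erase _ e hp, Finset.erase_eq]
  omega

lemma Pre_update_of_not_le {d : ℕ} {e : Fin d → ℕ} {p k : Fin d} (h : ¬ p ≤ k) (t : ℕ) :
    Pre (Function.update e p t) k = Pre e k := by
  classical
  apply Finset.sum_congr rfl
  intro m hm
  have hm' : m ≤ k := by simpa using hm
  have : m ≠ p := fun hmp => h (hmp ▸ hm')
  exact Function.update_of_ne this _ _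

lemma sum_val_update {d : ℕ} {s : Finset (Fin d)} {p : Fin d} (hp : p ∈ s)
    (g : Fin d → ℕ) (t : ℕ) :
    ∑ m ∈ s, Function.update g p t m = t + ∑ m ∈ s.erase p, g m := by
  classical
  rw [← Finset.add_sum_erase s (fun m => Function.update g p t m) hp]
  congr 1
  · simp
  · exact Finset.sum_congr rfl fun m hm =>
      Function.update_of_ne (Finset.mem_erase.mp hm).1 _ _

lemma sum_sq_update {d : ℕ} {s : Finset (Fin d)} {p : Fin d} (hp : p ∈ s)
    (g : Fin d → ℕ) (t : ℕ) :
    ∑ m ∈ s, (Function.update g p t m) ^ 2 = t ^ 2 + ∑ m ∈ s.erase p, (g m) ^ 2 := by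
  classical
  rw [← Finset.add_sum_erase s (fun m => (Function.update g p t m) ^ 2) hp]
  congr 1
  · simp
  · exact Finset.sum_congr rfl fun m hm => by
      rw [Function.update_of_ne (Finset.mem_erase.mp hm).1]

lemma muirhead_aux {d q : ℕ} (hdq : d ≤ q) {x : Fin q → ℝ} (hx : ∀ i, 0 ≤ x i) :
    ∀ (M : ℕ) (b a : Fin d → ℕ), (∑ m, (b m) ^ 2 ≤ M) →
    (∀ i j : Fin d, i ≤ j → a j ≤ a i) → (∀ i j : Fin d, i ≤ j → b j ≤ b i) →
    (∑ m, a m = ∑ m, b m) → (∀ k, Pre a k ≤ Pre b k) →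
    SSum hdq a x ≤ SSum hdq b x := by
  intro M
  induction M with
  | zero =>
    intro b a hM ha hb hsum hdom
    have hb0 : ∀ m, b m = 0 := by
      intro m
      have h0 : ∑ m, (b m) ^ 2 = 0 := Nat.le_zero.mp hM
      have := (Finset.sum_eq_zero_iff.mp h0) m (mem_univ m)
      simpa [pow_eq_zero_iff] using this
    have hbs : ∑ m, b m = 0 := Finset.sum_eq_zero fun m _ => hb0 m
    have ha0 : ∀ m, a m = 0 := by
      intro m
      have := Finset.sum_eq_zero_iff.mp (hsum.trans hbs) m (mem_univ m)
      exact this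
    have : a = b := funext fun m => by rw [ha0 m, hb0 m]
    rw [this]
  | succ M ih =>
    intro b a hM ha hb hsum hdom
    by_cases hab : a = b
    · rw [hab]
    classical
    have hDne : (univ.filter fun k => a k ≠ b k).Nonempty := by
      rcases Function.ne_iff.mp hab with ⟨k, hk⟩
      exact ⟨k, by simp [hk]⟩
    set i0 := (univ.filter fun k => a k ≠ b k).min' hDne with hi0def
    have hi0mem : a i0 ≠ b i0 := by
      have := Finset.min'_mem _ hDne
      simpa using this
    have hbelow : ∀ m : Fin d, m < i0 → a m = b m := by
      intro m hm
      by_contra hne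
      have : i0 ≤ m := Finset.min'_le _ m (by simp [hne])
      exact absurd hm (not_lt.mpr this)
    have hi0lt : a i0 < b i0 := by
      have hd0 := hdom i0
      rw [Pre_split a i0, Pre_split b i0] at hd0
      have heq : ∑ m ∈ univ.filter (· < i0), a m = ∑ m ∈ univ.filter (· < i0), b m :=
        Finset.sum_congr rfl fun m hm => hbelow m (by simpa using hm)
      omega
    have hJne : (univ.filter fun k => b k < a k).Nonempty := by
      by_contra hempty
      have hle : ∀ k, a k ≤ b k := by
        intro k
        by_contra hk
        exact hempty ⟨k, by simp; omega⟩
      have : ∑ m, a m < ∑ m, b m :=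
        Finset.sum_lt_sum (fun m _ => hle m) ⟨i0, mem_univ _, hi0lt⟩
      omega
    set j0 := (univ.filter fun k => b k < a k).min' hJne with hj0def
    have hj0 : b j0 < a j0 := by
      have := Finset.min'_mem _ hJne
      simpa using this
    have hj0min : ∀ m : Fin d, m < j0 → a m ≤ b m := by
      intro m hm
      by_contra h
      have : j0 ≤ m := Finset.min'_le _ m (by simp; omega)
      exact absurd hm (not_lt.mpr this)
    have hij0 : i0 < j0 := by
      rcases lt_trichotomy i0 j0 with h | h | h
      · exact h
      · rw [h] at hi0lt; omega
      · have := hbelow j0 h; omega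
    have hI2ne : (univ.filter fun k => b k = b i0).Nonempty := ⟨i0, by simp⟩
    set i2 := (univ.filter fun k => b k = b i0).max' hI2ne with hi2def
    have hi2val : b i2 = b i0 := by
      have := Finset.max'_mem _ hI2ne; simpa using this
    have hi2ge : i0 ≤ i2 := Finset.le_max' _ i0 (by simp)
    have hi2max : ∀ k, i2 < k → b k < b i0 := by
      intro k hk
      have hne : b k ≠ b i0 := by
        intro h
        exact absurd (Finset.le_max' _ k (by simp [h])) (not_le.mpr hk)
      have : b k ≤ b i2 := hb i2 k hk.le
      omega
    have hJ2ne : (univ.filter fun k => b k = b j0).Nonempty := ⟨j0, by simp⟩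
    set j2 := (univ.filter fun k => b k = b j0).min' hJ2ne with hj2def
    have hj2val : b j2 = b j0 := by
      have := Finset.min'_mem _ hJ2ne; simpa using this
    have hj2le : j2 ≤ j0 := Finset.min'_le _ j0 (by simp)
    have hj2min : ∀ k, k < j2 → b j0 < b k := by
      intro k hk
      have hne : b k ≠ b j0 := by
        intro h
        exact absurd (Finset.min'_le _ k (by simp [h])) (not_le.mpr hk)
      have : b j2 ≤ b k := hb k j2 hk.le
      omega
    have hgap : b j0 + 2 ≤ b i0 := by
      have h1 : a j0 ≤ a i0 := ha i0 j0 hij0.le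
      omega
    have hi2j2 : i2 < j2 := by
      by_contra h
      push_neg at h
      have : b i2 ≤ b j2 := hb j2 i2 h
      omega
    have hij2ne : i2 ≠ j2 := ne_of_lt hi2j2
    set c := Function.update (Function.update b i2 (b i2 - 1)) j2 (b j2 + 1) with hc
    have hcj2 : c j2 = b j0 + 1 := by simp [hc, hj2val]
    have hci2 : c i2 = b i0 - 1 := by
      rw [hc, Function.update_of_ne hij2ne, Function.update_self, hi2val]
    have hck : ∀ k, k ≠ i2 → k ≠ j2 → c k = b k := by
      intro k h1 h2
      rw [hc, Function.update_of_ne h2, Function.update_of_ne h1]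
    have hA : ∀ k, i2 < k → b k ≤ b i0 - 1 := fun k hk => by
      have := hi2max k hk; omega
    have hB : ∀ k, k < j2 → b j0 + 1 ≤ b k := fun k hk => by
      have := hj2min k hk; omega
    have hcanti : ∀ p r : Fin d, p ≤ r → c r ≤ c p := by
      intro p r hpr
      rcases eq_or_lt_of_le hpr with rfl | hlt
      · exact le_refl _
      by_cases hrj : r = j2
      · subst hrj
        rw [hcj2]
        by_cases hpi : p = i2
        · subst hpi; rw [hci2]; omega
        · rw [hck p hpi (ne_of_lt hlt)]
          exact hB p hlt
      · by_cases hri : r = i2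
        · subst hri
          rw [hci2]
          have hpj : p ≠ j2 := ne_of_lt (lt_trans hlt hi2j2)
          have hpi : p ≠ i2 := ne_of_lt hlt
          rw [hck p hpi hpj]
          have : b i2 ≤ b p := hb p i2 hpr
          omega
        · rw [hck r hri hrj]
          by_cases hpj : p = j2
          · subst hpj
            rw [hcj2]
            have : b r ≤ b j2 := hb j2 r hlt.le
            omega
          · by_cases hpi : p = i2
            · subst hpi
              rw [hci2]
              exact hA r hlt
            · rw [hck p hpi hpj]
              exact hb p r hpr
    -- sum of c equals sum of b
    have hi2mem : i2 ∈ univ.erase j2 := Finset.mem_erase.mpr ⟨hij2ne, mem_univ _⟩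
    have hsum_c : ∑ m, c m = ∑ m, b m := by
      rw [hc, sum_val_update (mem_univ j2), sum_val_update hi2mem]
      have h3 : ∑ m, b m = b j2 + (b i2 + ∑ m ∈ (univ.erase j2).erase i2, b m) := by
        rw [Finset.add_sum_erase _ b hi2mem, Finset.add_sum_erase _ b (mem_univ j2)]
      omega
    -- dominance of c over a
    have hdomc : ∀ k, Pre a k ≤ Pre c k := by
      intro k
      have hbi2 : 2 ≤ b i2 := by omega
      by_cases hk2 : j2 ≤ k
      · have hik : i2 ≤ k := le_trans hi2j2.le hk2
        have h1 : Pre c k + (Function.update b i2 (b i2 - 1)) j2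
            = Pre (Function.update b i2 (b i2 - 1)) k + (b j2 + 1) :=
          Pre_update_of_le hk2 _
        have h2 : Pre (Function.update b i2 (b i2 - 1)) k + b i2 = Pre b k + (b i2 - 1) :=
          Pre_update_of_le hik _
        have hinj2 : (Function.update b i2 (b i2 - 1)) j2 = b j2 :=
          Function.update_of_ne hij2ne.symm _ _
        have := hdom k
        omega
      · by_cases hk1 : i2 ≤ k
        · have h1 : Pre c k = Pre (Function.update b i2 (b i2 - 1)) k :=
            Pre_update_of_not_le hk2 _
          have h2 : Pre (Function.update b i2 (b i2 - 1)) k + b i2 = Pre b k + (b i2 - 1) :=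
            Pre_update_of_le hk1 _
          have hstrict : Pre a k < Pre b k := by
            apply Finset.sum_lt_sum
            · intro m hm
              have hmk : m ≤ k := by simpa using hm
              have hkj2 : k < j2 := lt_of_not_ge hk2
              have : m < j0 := lt_of_lt_of_le (lt_of_le_of_lt hmk hkj2) hj2le
              exact hj0min m this
            · exact ⟨i0, by simp [le_trans hi2ge hk1], hi0lt⟩
          omega
        · have h1 : Pre c k = Pre (Function.update b i2 (b i2 - 1)) k :=
            Pre_update_of_not_le hk2 _
          have h2 : Pre (Function.update b i2 (b i2 - 1)) k = Pre b k :=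
            Pre_update_of_not_le hk1 _
          have := hdom k
          omega
    -- measure decreases
    have hmu : ∑ m, (c m) ^ 2 ≤ M := by
      have h1 : ∑ m, (c m) ^ 2
          = (b j2 + 1) ^ 2 + ((b i2 - 1) ^ 2 + ∑ m ∈ (univ.erase j2).erase i2, (b m) ^ 2) := by
        rw [hc, sum_sq_update (mem_univ j2), sum_sq_update hi2mem]
      have h3 : ∑ m, (b m) ^ 2
          = (b j2) ^ 2 + ((b i2) ^ 2 + ∑ m ∈ (univ.erase j2).erase i2, (b m) ^ 2) := by
        rw [Finset.add_sum_erase _ (fun m => (b m) ^ 2) hi2mem,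
          Finset.add_sum_erase _ (fun m => (b m) ^ 2) (mem_univ j2)]
      obtain ⟨t, ht⟩ : ∃ t, b i2 = b j2 + 2 + t := ⟨b i2 - b j2 - 2, by omega⟩
      have hkey : (b j2 + 1) ^ 2 + (b i2 - 1) ^ 2 + 1 ≤ (b j2) ^ 2 + (b i2) ^ 2 := by
        rw [ht]
        have : b j2 + 2 + t - 1 = b j2 + 1 + t := by omega
        rw [this]
        nlinarith
      omega
    -- conclude
    have hstep : SSum hdq c x ≤ SSum hdq b x := by
      rw [hc]
      exact transfer_le hdq hx b i2 j2 hij2ne (by omega)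
    exact le_trans (ih c a hmu ha hcanti (hsum.trans hsum_c.symm) hdomc) hstep

lemma hall_lemma {α : Type} [DecidableEq α] (S : Finset α) (dom : α → α → Prop) (ω : α → ℝ)
    (hm : ∀ U : Finset α, (∀ n ∈ U, n ∈ S ∧ ω n < 0) → ∀ RU : Finset α,
        (∀ p, p ∈ RU ↔ p ∈ S ∧ 0 ≤ ω p ∧ ∃ n ∈ U, dom n p) →
        ∑ n ∈ U, -ω n ≤ ∑ p ∈ RU, ω p) :
    ∀ (k : ℕ) (U : Finset α), U.card ≤ k → (∀ n ∈ U, n ∈ S ∧ ω n < 0) →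
      ∀ v : α → ℝ, (∀ n ∈ U, 0 ≤ v n) →
      (∀ n ∈ U, ∀ p ∈ S, 0 ≤ ω p → dom n p → v n ≤ v p) →
      ∀ RU : Finset α, (∀ p, p ∈ RU ↔ p ∈ S ∧ 0 ≤ ω p ∧ ∃ n ∈ U, dom n p) →
      ∑ n ∈ U, (-ω n) * v n ≤ ∑ p ∈ RU, ω p * v p := by
  intro k
  induction k with
  | zero =>
    intro U hcard hUS v hv hmono RU hRU
    have hU : U = ∅ := Finset.card_eq_zero.mp (Nat.le_zero.mp hcard)
    subst hU
    have hRUe : RU = ∅ := Finset.eq_empty_of_forall_notMem fun p hp => by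
      obtain ⟨_, _, n, hn, _⟩ := (hRU p).mp hp
      exact absurd hn (Finset.notMem_empty n)
    simp [hRUe]
  | succ k ih =>
    intro U hcard hUS v hv hmono RU hRU
    rcases U.eq_empty_or_nonempty with rfl | hne
    · have hRUe : RU = ∅ := Finset.eq_empty_of_forall_notMem fun p hp => by
        obtain ⟨_, _, n, hn, _⟩ := (hRU p).mp hp
        exact absurd hn (Finset.notMem_empty n)
      simp [hRUe]
    classical
    obtain ⟨n₀, hn₀, hmin⟩ := Finset.exists_min_image U v hne
    set c := v n₀ with hcdef
    have hc : 0 ≤ c := hv n₀ hn₀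
    set U' := U.erase n₀ with hU'def
    set RU' := S.filter (fun p => 0 ≤ ω p ∧ ∃ n ∈ U', dom n p) with hRU'def
    have hRU'mem : ∀ p, p ∈ RU' ↔ p ∈ S ∧ 0 ≤ ω p ∧ ∃ n ∈ U', dom n p := by
      intro p
      simp [hRU'def, Finset.mem_filter]
    have hsub : RU' ⊆ RU := by
      intro p hp
      obtain ⟨hpS, hpω, n, hn, hd⟩ := (hRU'mem p).mp hp
      exact (hRU p).mpr ⟨hpS, hpω, n, Finset.mem_of_mem_erase hn, hd⟩
    have hvge : ∀ p ∈ RU, c ≤ v p := by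
      intro p hp
      obtain ⟨hpS, hpω, n, hn, hd⟩ := (hRU p).mp hp
      exact le_trans (hmin n hn) (hmono n hn p hpS hpω hd)
    have ihU : ∑ n ∈ U', (-ω n) * (v n - c) ≤ ∑ p ∈ RU', ω p * (v p - c) := by
      apply ih U'
      · have h1 : U' = U.erase n₀ := hU'def
        rw [h1, Finset.card_erase_of_mem hn₀]
        omega
      · exact fun n hn => hUS n (Finset.mem_of_mem_erase hn)
      · exact fun n hn => by
          have := hmin n (Finset.mem_of_mem_erase hn); linarith
      · exact fun n hn p hpS hpω hd => by
          have := hmono n (Finset.mem_of_mem_erase hn) p hpS hpω hd; linarith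
      · exact hRU'mem
    have hallU : ∑ n ∈ U, -ω n ≤ ∑ p ∈ RU, ω p := hm U hUS RU hRU
    have idU : ∑ n ∈ U, (-ω n) * v n
        = ∑ n ∈ U, (-ω n) * (v n - c) + c * ∑ n ∈ U, (-ω n) := by
      rw [Finset.mul_sum, ← Finset.sum_add_distrib]
      exact Finset.sum_congr rfl fun n _ => by ring
    have idR : ∑ p ∈ RU, ω p * v p
        = ∑ p ∈ RU, ω p * (v p - c) + c * ∑ p ∈ RU, ω p := by
      rw [Finset.mul_sum, ← Finset.sum_add_distrib]
      exact Finset.sum_congr rfl fun p _ => by ring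
    have hU'sum : ∑ n ∈ U, (-ω n) * (v n - c) = ∑ n ∈ U', (-ω n) * (v n - c) := by
      rw [← Finset.add_sum_erase U (fun n => (-ω n) * (v n - c)) hn₀]
      simp [hcdef, hU'def]
    have hsub_ineq : ∑ p ∈ RU', ω p * (v p - c) ≤ ∑ p ∈ RU, ω p * (v p - c) := by
      apply Finset.sum_le_sum_of_subset_of_nonneg hsub
      intro p hp _
      have h1 := ((hRU p).mp hp).2.1
      have h2 := hvge p hp
      have : 0 ≤ v p - c := by linarith
      exact mul_nonneg h1 this
    have hmul := mul_le_mul_of_nonneg_left hallU hc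
    rw [idU, idR, hU'sum]
    linarith


def nv {d : ℕ} (ℓ : Fin d → Fin (d + 1)) : Fin d → ℕ := fun i => (ℓ i : ℕ)

lemma mem_Pd {d : ℕ} {ℓ : Fin d → Fin (d + 1)} :
    ℓ ∈ Pd d ↔ (∀ i j : Fin d, i ≤ j → (ℓ j : ℕ) ≤ (ℓ i : ℕ)) ∧ (∑ i, (ℓ i : ℕ)) = d := by
  simp [Pd, Finset.mem_filter]

lemma Pd_antitone {d : ℕ} {ℓ : Fin d → Fin (d + 1)} (h : ℓ ∈ Pd d) :
    ∀ i j : Fin d, i ≤ j → nv ℓ j ≤ nv ℓ i := (mem_Pd.mp h).1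

lemma Pd_sum {d : ℕ} {ℓ : Fin d → Fin (d + 1)} (h : ℓ ∈ Pd d) :
    ∑ i, nv ℓ i = d := (mem_Pd.mp h).2

lemma symSum_eq {d q : ℕ} (hdq : d ≤ q) (ℓ : Fin d → Fin (d + 1)) (x : Fin q → ℝ) :
    symSum d q ℓ x = SSum hdq (nv ℓ) x := by
  unfold symSum SSum
  apply Finset.sum_congr rfl
  intro τ _
  apply Finset.prod_congr rfl
  intro i _
  have h : (i : ℕ) < q := lt_of_lt_of_le i.isLt hdq
  rw [dif_pos h]
  rfl

lemma domLE_pre {d : ℕ} {m p : Fin d → Fin (d + 1)} (h : domLE m p) :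
    ∀ k, Pre (nv m) k ≤ Pre (nv p) k := h

lemma muirhead {d q : ℕ} (hdq : d ≤ q) {x : Fin q → ℝ} (hx : ∀ i, 0 ≤ x i)
    {m p : Fin d → Fin (d + 1)} (hm : m ∈ Pd d) (hp : p ∈ Pd d) (hdom : domLE m p) :
    symSum d q m x ≤ symSum d q p x := by
  rw [symSum_eq hdq, symSum_eq hdq]
  exact muirhead_aux hdq hx (∑ k, (nv p k) ^ 2) (nv p) (nv m) le_rfl (Pd_antitone hm)
    (Pd_antitone hp) ((Pd_sum hm).trans (Pd_sum hp).symm) (domLE_pre hdom)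

lemma nv_topPart {d : ℕ} : nv (topPart d) = etopN d := by
  funext i
  by_cases h : (i : ℕ) = 0 <;> simp [nv, topPart, etopN, h]

lemma sum_etopN {d : ℕ} (hd0 : 0 < d) : ∑ m, etopN d m = d := by
  rw [← Finset.add_sum_erase _ _ (mem_univ (⟨0, hd0⟩ : Fin d))]
  have h1 : etopN d ⟨0, hd0⟩ = d := by simp [etopN]
  have h2 : ∑ m ∈ univ.erase (⟨0, hd0⟩ : Fin d), etopN d m = 0 := by
    apply Finset.sum_eq_zero
    intro m hm
    have : (m : ℕ) ≠ 0 := fun hv => (Finset.mem_erase.mp hm).1 (Fin.ext hv)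
    simp [etopN, this]
  rw [h1, h2]
  omega

lemma sum_ecN {d : ℕ} (hd : 2 ≤ d) : ∑ m, ecN d m = d := by
  have h0 : 0 < d := by omega
  have h1 : 1 < d := by omega
  have hne01 : (⟨0, h0⟩ : Fin d) ≠ ⟨1, h1⟩ := by simp [Fin.ext_iff]
  have hmem : (⟨1, h1⟩ : Fin d) ∈ univ.erase (⟨0, h0⟩ : Fin d) :=
    Finset.mem_erase.mpr ⟨hne01.symm, mem_univ _⟩
  rw [← Finset.add_sum_erase _ _ (mem_univ (⟨0, h0⟩ : Fin d)),
    ← Finset.add_sum_erase _ _ hmem]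
  have e0 : ecN d ⟨0, h0⟩ = d - 1 := by simp [ecN]
  have e1 : ecN d ⟨1, h1⟩ = 1 := by simp [ecN]
  have hrest : ∑ m ∈ (univ.erase (⟨0, h0⟩ : Fin d)).erase ⟨1, h1⟩, ecN d m = 0 := by
    apply Finset.sum_eq_zero
    intro m hm
    simp only [Finset.mem_erase] at hm
    have hm1 : (m : ℕ) ≠ 1 := fun hv => hm.1 (Fin.ext hv)
    have hm0 : (m : ℕ) ≠ 0 := fun hv => hm.2.1 (Fin.ext hv)
    simp [ecN, hm0, hm1]
  rw [e0, e1, hrest]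
  omega

lemma ecN_antitone {d : ℕ} (hd : 2 ≤ d) : ∀ i j : Fin d, i ≤ j → ecN d j ≤ ecN d i := by
  intro i j hij
  have hij' : (i : ℕ) ≤ (j : ℕ) := hij
  simp only [ecN]
  split_ifs <;> omega

lemma Pre_le_total {d : ℕ} (e : Fin d → ℕ) (hsum : ∑ m, e m = d) (k : Fin d) :
    Pre e k ≤ d := by
  exact le_trans (Finset.sum_le_sum_of_subset (Finset.filter_subset _ _)) (le_of_eq hsum)

lemma top_of_first_eq {d : ℕ} {ℓ : Fin d → Fin (d + 1)} (hℓ : ℓ ∈ Pd d) (h0 : 0 < d)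
    (h : (ℓ ⟨0, h0⟩ : ℕ) = d) : ℓ = topPart d := by
  have hsum := Pd_sum hℓ
  have hsplit := Finset.add_sum_erase univ (nv ℓ) (mem_univ (⟨0, h0⟩ : Fin d))
  have hfirst : nv ℓ ⟨0, h0⟩ = d := h
  have hrest : ∑ m ∈ univ.erase (⟨0, h0⟩ : Fin d), nv ℓ m = 0 := by
    rw [hsum] at hsplit
    omega
  have hz : ∀ m ∈ univ.erase (⟨0, h0⟩ : Fin d), nv ℓ m = 0 :=
    fun m hm => Finset.sum_eq_zero_iff.mp hrest m hm
  funext m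
  by_cases hm : (m : ℕ) = 0
  · have hme : m = ⟨0, h0⟩ := Fin.ext hm
    apply Fin.ext
    have htv : ((topPart d m : Fin (d + 1)) : ℕ) = d := by
      simp [topPart, hm, Fin.val_last]
    rw [htv, hme]
    exact h
  · have hm' : m ∈ univ.erase (⟨0, h0⟩ : Fin d) :=
      Finset.mem_erase.mpr ⟨fun he => hm (by rw [he]), mem_univ _⟩
    apply Fin.ext
    have htv : ((topPart d m : Fin (d + 1)) : ℕ) = 0 := by simp [topPart, hm]
    rw [htv]
    exact hz m hm'

lemma dom_ec {d : ℕ} (hd : 2 ≤ d) {ℓ : Fin d → Fin (d + 1)} (hℓ : ℓ ∈ Pd d)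
    (hne : ℓ ≠ topPart d) : ∀ k, Pre (nv ℓ) k ≤ Pre (ecN d) k := by
  intro k
  have h0 : 0 < d := by omega
  have h1 : 1 < d := by omega
  have hfirst : nv ℓ ⟨0, h0⟩ ≤ d - 1 := by
    by_contra h
    push_neg at h
    have hle : (ℓ ⟨0, h0⟩ : ℕ) ≤ d := Fin.is_le _
    have heq : (ℓ ⟨0, h0⟩ : ℕ) = d := by
      have : d - 1 < nv ℓ ⟨0, h0⟩ := h
      unfold nv at this
      omega
    exact hne (top_of_first_eq hℓ h0 heq)
  by_cases hk : (k : ℕ) = 0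
  · have hke : k = ⟨0, h0⟩ := Fin.ext hk
    have hPre : ∀ e : Fin d → ℕ, Pre e k = e k := by
      intro e
      rw [Pre_split]
      have hempty : univ.filter (· < k) = (∅ : Finset (Fin d)) := by
        ext m
        simp only [Finset.mem_filter, Finset.mem_univ, true_and, Finset.notMem_empty,
          iff_false]
        intro hmk
        have : (m : ℕ) < (k : ℕ) := hmk
        omega
      rw [hempty]
      simp
    rw [hPre, hPre, hke]
    have hec : ecN d ⟨0, h0⟩ = d - 1 := by simp [ecN]
    rw [hec]
    exact hfirst
  · have hup : Pre (nv ℓ) k ≤ d := Pre_le_total _ (Pd_sum hℓ) k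
    have hne01 : (⟨0, h0⟩ : Fin d) ≠ ⟨1, h1⟩ := by simp [Fin.ext_iff]
    have hpair : ({⟨0, h0⟩, ⟨1, h1⟩} : Finset (Fin d)) ⊆ univ.filter (· ≤ k) := by
      intro m hm
      simp only [Finset.mem_insert, Finset.mem_singleton] at hm
      rcases hm with rfl | rfl
      · simp only [Finset.mem_filter, Finset.mem_univ, true_and]
        show (0 : ℕ) ≤ (k : ℕ)
        omega
      · simp only [Finset.mem_filter, Finset.mem_univ, true_and]
        show (1 : ℕ) ≤ (k : ℕ)
        omega
    have hsum2 : ∑ m ∈ ({⟨0, h0⟩, ⟨1, h1⟩} : Finset (Fin d)), ecN d m = d := by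
      rw [Finset.sum_pair hne01]
      have e0 : ecN d ⟨0, h0⟩ = d - 1 := by simp [ecN]
      have e1 : ecN d ⟨1, h1⟩ = 1 := by simp [ecN]
      rw [e0, e1]
      omega
    have hmono2 : ∑ m ∈ ({⟨0, h0⟩, ⟨1, h1⟩} : Finset (Fin d)), ecN d m ≤ Pre (ecN d) k :=
      Finset.sum_le_sum_of_subset hpair
    omega

lemma topPart_mem {d : ℕ} (hd : 1 ≤ d) : topPart d ∈ Pd d := by
  rw [mem_Pd]
  constructor
  · intro i j hij
    by_cases hi : (i : ℕ) = 0
    · have : ((topPart d i : Fin (d + 1)) : ℕ) = d := by simp [topPart, hi, Fin.val_last]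
      rw [this]
      exact Fin.is_le _
    · have hj : (j : ℕ) ≠ 0 := by
        have : (i : ℕ) ≤ (j : ℕ) := hij
        omega
      simp [topPart, hi, hj]
  · have h1 : ∑ i, ((topPart d i : Fin (d + 1)) : ℕ) = ∑ i, etopN d i := by
      rw [← nv_topPart]; rfl
    rw [h1]
    exact sum_etopN (by omega)

lemma symSum_lt_top {d q : ℕ} (hd : 2 ≤ d) (hdq : d ≤ q) {x : Fin q → ℝ}
    (hx : ∀ i, 0 ≤ x i) {a b : Fin q} (hab : x a ≠ x b) {ℓ : Fin d → Fin (d + 1)}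
    (hℓ : ℓ ∈ Pd d) (hne : ℓ ≠ topPart d) :
    symSum d q ℓ x < symSum d q (topPart d) x := by
  rw [symSum_eq hdq, symSum_eq hdq, nv_topPart]
  have h1 : SSum hdq (nv ℓ) x ≤ SSum hdq (ecN d) x :=
    muirhead_aux hdq hx (∑ k, (ecN d k) ^ 2) (ecN d) (nv ℓ) le_rfl (Pd_antitone hℓ)
      (ecN_antitone hd) ((Pd_sum hℓ).trans (sum_ecN hd).symm) (dom_ec hd hℓ hne)
  exact lt_of_le_of_lt h1 (SSum_ec_lt_top hd hdq hx hab)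

lemma symSum_nonneg' {d q : ℕ} (hdq : d ≤ q) (ℓ : Fin d → Fin (d + 1)) {x : Fin q → ℝ}
    (hx : ∀ i, 0 ≤ x i) : 0 ≤ symSum d q ℓ x := by
  rw [symSum_eq hdq]
  exact SSum_nonneg hdq _ hx

lemma SSum_const {d q : ℕ} (hdq : d ≤ q) (hq : 0 < q) {x : Fin q → ℝ}
    (hconst : ∀ i j, x i = x j) {e e' : Fin d → ℕ} (h : ∑ i, e i = ∑ i, e' i) :
    SSum hdq e x = SSum hdq e' x := by
  unfold SSum
  apply Finset.sum_congr rfl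
  intro τ _
  have key : ∀ f : Fin d → ℕ,
      ∏ i, x (τ (Fin.castLE hdq i)) ^ f i = x ⟨0, hq⟩ ^ (∑ i, f i) := by
    intro f
    rw [← Finset.prod_pow_eq_pow_sum]
    exact Finset.prod_congr rfl fun i _ => by rw [hconst (τ (Fin.castLE hdq i)) ⟨0, hq⟩]
  rw [key e, key e', h]

lemma positivity_aux {d : ℕ} (ω : (Fin d → Fin (d + 1)) → ℝ)
    (hm : ∀ U : Finset (Fin d → Fin (d + 1)), (∀ n ∈ U, n ∈ Pd d ∧ ω n < 0) →
      ∀ RU : Finset (Fin d → Fin (d + 1)),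
      (∀ p, p ∈ RU ↔ p ∈ Pd d ∧ 0 ≤ ω p ∧ ∃ n ∈ U, domLE n p) →
      ∑ n ∈ U, -ω n ≤ ∑ p ∈ RU, ω p)
    (v : (Fin d → Fin (d + 1)) → ℝ)
    (hv0 : ∀ ℓ ∈ Pd d, 0 ≤ v ℓ)
    (hmono : ∀ n ∈ Pd d, ω n < 0 → ∀ p ∈ Pd d, 0 ≤ ω p → domLE n p → v n ≤ v p) :
    0 ≤ ∑ ℓ ∈ Pd d, ω ℓ * v ℓ := by
  classical
  set N := (Pd d).filter (fun n => ω n < 0) with hN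
  set RN := (Pd d).filter (fun p => 0 ≤ ω p ∧ ∃ n ∈ N, domLE n p) with hRN
  have hL : ∑ n ∈ N, (-ω n) * v n ≤ ∑ p ∈ RN, ω p * v p := by
    apply hall_lemma (Pd d) domLE ω hm N.card N le_rfl
    · intro n hn
      exact ⟨(Finset.mem_filter.mp hn).1, (Finset.mem_filter.mp hn).2⟩
    · intro n hn
      exact hv0 n (Finset.mem_filter.mp hn).1
    · intro n hn p hpS hpω hdp
      exact hmono n (Finset.mem_filter.mp hn).1 (Finset.mem_filter.mp hn).2 p hpS hpω hdp
    · intro p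
      rw [hRN, Finset.mem_filter]
  have h1 : ∑ p ∈ RN, ω p * v p ≤ ∑ p ∈ (Pd d).filter (fun p => 0 ≤ ω p), ω p * v p := by
    apply Finset.sum_le_sum_of_subset_of_nonneg
    · intro p hp
      rw [hRN, Finset.mem_filter] at hp
      exact Finset.mem_filter.mpr ⟨hp.1, hp.2.1⟩
    · intro p hp _
      exact mul_nonneg (Finset.mem_filter.mp hp).2 (hv0 p (Finset.mem_filter.mp hp).1)
  have hsplit := Finset.sum_filter_add_sum_filter_not (Pd d) (fun p => 0 ≤ ω p)
    (fun ℓ => ω ℓ * v ℓ)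
  have hNeq : (Pd d).filter (fun p => ¬ 0 ≤ ω p) = N := by
    rw [hN]
    apply Finset.filter_congr
    intro ℓ _
    simp [not_le]
  rw [hNeq] at hsplit
  have hneg : ∑ n ∈ N, ω n * v n = - ∑ n ∈ N, (-ω n) * v n := by
    rw [← Finset.sum_neg_distrib]
    exact Finset.sum_congr rfl fun n _ => by ring
  linarith

open scoped Classical in
theorem fractional_matching_gives_positivity
    {d q : ℕ} (hd : 2 ≤ d) (hdq : d ≤ q)
    (ω : (Fin d → Fin (d + 1)) → ℝ)
    (hsum : ∑ ℓ ∈ Pd d, ω ℓ = 0)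
    (hmatch : ∀ U ⊆ (Pd d).filter fun ℓ => ω ℓ < 0,
      ∑ m ∈ U, -ω m ≤
        ∑ ℓ' ∈ (Pd d).filter fun ℓ' => 0 ≤ ω ℓ' ∧ ∃ m ∈ U, domLE m ℓ', ω ℓ') :
    (∀ x : Fin q → ℝ, (∀ i, 0 ≤ x i) → 0 ≤ ∑ ℓ ∈ Pd d, ω ℓ * symSum d q ℓ x) ∧
    (((Pd d).filter fun ℓ => ω ℓ < 0).Nonempty → 0 < ω (topPart d) →
      ∀ x : Fin q → ℝ, (∀ i, 0 ≤ x i) →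
        ((∑ ℓ ∈ Pd d, ω ℓ * symSum d q ℓ x) = 0 ↔ ∀ i j, x i = x j)) := by
  have hm : ∀ U : Finset (Fin d → Fin (d + 1)), (∀ n ∈ U, n ∈ Pd d ∧ ω n < 0) →
      ∀ RU : Finset (Fin d → Fin (d + 1)),
      (∀ p, p ∈ RU ↔ p ∈ Pd d ∧ 0 ≤ ω p ∧ ∃ n ∈ U, domLE n p) →
      ∑ n ∈ U, -ω n ≤ ∑ p ∈ RU, ω p := by
    intro U hUS RU hRU
    have hUsub : U ⊆ (Pd d).filter (fun ℓ => ω ℓ < 0) := fun n hn =>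
      Finset.mem_filter.mpr ⟨(hUS n hn).1, (hUS n hn).2⟩
    have hRUeq : RU = (Pd d).filter (fun ℓ' => 0 ≤ ω ℓ' ∧ ∃ m ∈ U, domLE m ℓ') := by
      ext p
      rw [hRU p, Finset.mem_filter]
    rw [hRUeq]
    exact hmatch U hUsub
  constructor
  · intro x hx
    exact positivity_aux ω hm (fun ℓ => symSum d q ℓ x)
      (fun ℓ _ => symSum_nonneg' hdq ℓ hx)
      (fun n hn _ p hp hpω hdom => muirhead hdq hx hn hp hdom)
  · intro hNne htop x hx
    constructor
    · intro h0 i j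
      by_contra hij
      set v : (Fin d → Fin (d + 1)) → ℝ := fun ℓ => symSum d q ℓ x with hv
      obtain ⟨n₀, hn₀, hmax⟩ := Finset.exists_max_image _ v hNne
      have hn₀Pd : n₀ ∈ Pd d := (Finset.mem_filter.mp hn₀).1
      have hn₀neg : ω n₀ < 0 := (Finset.mem_filter.mp hn₀).2
      have htopmem : topPart d ∈ Pd d := topPart_mem (by omega)
      have hn₀ne : n₀ ≠ topPart d := fun h => by rw [h] at hn₀neg; linarith
      have hlt : v n₀ < v (topPart d) :=
        symSum_lt_top hd hdq hx hij hn₀Pd hn₀ne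
      set v' := Function.update v (topPart d) (v n₀) with hv'
      have hv'top : v' (topPart d) = v n₀ := Function.update_self _ _ _
      have hv'ne : ∀ ℓ, ℓ ≠ topPart d → v' ℓ = v ℓ := fun ℓ h =>
        Function.update_of_ne h _ _
      have hpos : 0 ≤ ∑ ℓ ∈ Pd d, ω ℓ * v' ℓ := by
        apply positivity_aux ω hm v'
        · intro ℓ hℓ
          by_cases h : ℓ = topPart d
          · rw [h, hv'top]
            exact symSum_nonneg' hdq n₀ hx
          · rw [hv'ne ℓ h]
            exact symSum_nonneg' hdq ℓ hx
        · intro n hnPd hnneg p hpPd hpω hdom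
          have hnne : n ≠ topPart d := fun h => by rw [h] at hnneg; linarith
          rw [hv'ne n hnne]
          by_cases hp : p = topPart d
          · rw [hp, hv'top]
            exact hmax n (Finset.mem_filter.mpr ⟨hnPd, hnneg⟩)
          · rw [hv'ne p hp]
            exact muirhead hdq hx hnPd hpPd hdom
      have hdiff : ∑ ℓ ∈ Pd d, ω ℓ * v ℓ - ∑ ℓ ∈ Pd d, ω ℓ * v' ℓ
          = ω (topPart d) * (v (topPart d) - v n₀) := by
        rw [← Finset.sum_sub_distrib, Finset.sum_eq_single (topPart d)]
        · rw [hv'top]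
          ring
        · intro ℓ _ hℓ
          rw [hv'ne ℓ hℓ]
          ring
        · intro h
          exact absurd htopmem h
      have hgain : 0 < ω (topPart d) * (v (topPart d) - v n₀) :=
        mul_pos htop (by linarith)
      have h0' : ∑ ℓ ∈ Pd d, ω ℓ * v ℓ = 0 := h0
      linarith
    · intro hconst
      have hrepl : ∀ ℓ ∈ Pd d, symSum d q ℓ x = symSum d q (topPart d) x := by
        intro ℓ hℓ
        rw [symSum_eq hdq, symSum_eq hdq]
        apply SSum_const hdq (by omega) hconst
        rw [Pd_sum hℓ, nv_topPart, sum_etopN (by omega : 0 < d)]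
      calc ∑ ℓ ∈ Pd d, ω ℓ * symSum d q ℓ x
          = ∑ ℓ ∈ Pd d, ω ℓ * symSum d q (topPart d) x :=
            Finset.sum_congr rfl fun ℓ hℓ => by rw [hrepl ℓ hℓ]
        _ = (∑ ℓ ∈ Pd d, ω ℓ) * symSum d q (topPart d) x := (Finset.sum_mul _ _ _).symm
        _ = 0 := by rw [hsum]; ring
end

section
/- Let ℓ ∈ P_d and let 1 ≤ k ≤ d be an integer. If ℓ has at most k − 1 parts equal to 1, then ℓ! = ℓ₁!·ℓ₂!·…·ℓ_d! ≥ 2^{(d−k)/2}. -/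
open Finset

lemma two_pow_le_sq_factorial (n : ℕ) (h : n ≠ 1) : 2 ^ n ≤ n.factorial ^ 2 := by
  match n with
  | 0 => decide
  | 1 => exact absurd rfl h
  | (m + 2) =>
    clear h
    induction m with
    | zero => decide
    | succ m ih =>
      have h1 : 2 ^ (m + 3) = 2 * 2 ^ (m + 2) := by ring
      have h2 : (m + 3).factorial = (m + 3) * (m + 2).factorial := rfl
      have ih' := ih
      calc 2 ^ (m + 3) = 2 * 2 ^ (m + 2) := h1
        _ ≤ 2 * (m + 2).factorial ^ 2 := by
            exact Nat.mul_le_mul_left 2 ih'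
        _ ≤ (m + 3) ^ 2 * (m + 2).factorial ^ 2 := by
            exact Nat.mul_le_mul_right _ (by nlinarith)
        _ = (m + 3).factorial ^ 2 := by rw [h2]; ring

theorem lfact_lower_bound_few_ones
    {d k : ℕ} (hk1 : 1 ≤ k) (hkd : k ≤ d)
    (ℓ : Fin d → Fin (d + 1)) (hℓ : ℓ ∈ Pd d)
    (hones : bj ℓ 1 ≤ k - 1) :
    (2 : ℝ) ^ (((d - k : ℕ) : ℝ) / 2) ≤ (lfact ℓ : ℝ) := by
  have hsum : (∑ i, (ℓ i : ℕ)) = d := by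
    simp only [Pd, mem_filter] at hℓ
    exact hℓ.2.2
  -- the set of indices with part ≠ 1
  set S : Finset (Fin d) := univ.filter (fun i => (ℓ i : ℕ) ≠ 1) with hS
  have hsplit : (∑ i ∈ S, (ℓ i : ℕ)) + bj ℓ 1 = d := by
    have h1 : (∑ i ∈ univ.filter (fun i => (ℓ i : ℕ) = 1), (ℓ i : ℕ)) = bj ℓ 1 := by
      rw [bj]
      rw [Finset.sum_congr rfl (fun i hi => (Finset.mem_filter.mp hi).2)]
      simp [Finset.sum_const]
    calc (∑ i ∈ S, (ℓ i : ℕ)) + bj ℓ 1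
        = (∑ i ∈ univ.filter (fun i => ¬ (ℓ i : ℕ) = 1), (ℓ i : ℕ))
          + (∑ i ∈ univ.filter (fun i => (ℓ i : ℕ) = 1), (ℓ i : ℕ)) := by rw [h1]
      _ = ∑ i, (ℓ i : ℕ) := by
          rw [Nat.add_comm, Finset.sum_filter_add_sum_filter_not]
      _ = d := hsum
  have hdk : d - k ≤ ∑ i ∈ S, (ℓ i : ℕ) := by omega
  have key : 2 ^ (d - k) ≤ lfact ℓ ^ 2 := by
    calc 2 ^ (d - k) ≤ 2 ^ (∑ i ∈ S, (ℓ i : ℕ)) := Nat.pow_le_pow_right (by norm_num) hdk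
      _ = ∏ i ∈ S, 2 ^ (ℓ i : ℕ) := by rw [Finset.prod_pow_eq_pow_sum]
      _ ≤ ∏ i ∈ S, ((ℓ i : ℕ).factorial) ^ 2 := by
          apply Finset.prod_le_prod' fun i hi =>
            two_pow_le_sq_factorial _ (Finset.mem_filter.mp hi).2
      _ ≤ ∏ i, ((ℓ i : ℕ).factorial) ^ 2 := by
          apply Finset.prod_le_prod_of_subset_of_one_le' (Finset.subset_univ S)
          intro i _ _
          exact Nat.one_le_pow _ _ (Nat.factorial_pos _)
      _ = lfact ℓ ^ 2 := by rw [lfact, ← Finset.prod_pow]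
  have keyR : (2 : ℝ) ^ ((d - k : ℕ) : ℝ) ≤ ((lfact ℓ : ℝ)) ^ 2 := by
    rw [Real.rpow_natCast]
    calc ((2 : ℝ)) ^ (d - k : ℕ) = ((2 ^ (d - k) : ℕ) : ℝ) := by push_cast; ring
      _ ≤ ((lfact ℓ ^ 2 : ℕ) : ℝ) := by exact_mod_cast key
      _ = (lfact ℓ : ℝ) ^ 2 := by push_cast; ring
  have h2 : (2 : ℝ) ^ (((d - k : ℕ) : ℝ) / 2)
      = Real.sqrt ((2 : ℝ) ^ ((d - k : ℕ) : ℝ)) := by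
    rw [Real.sqrt_eq_rpow, ← Real.rpow_mul (by norm_num)]
    ring_nf
  rw [h2]
  calc Real.sqrt ((2 : ℝ) ^ ((d - k : ℕ) : ℝ)) ≤ Real.sqrt ((lfact ℓ : ℝ) ^ 2) :=
        Real.sqrt_le_sqrt keyR
    _ = (lfact ℓ : ℝ) := Real.sqrt_sq (by positivity)
end
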